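/- arXiv:0803.4332 — 2 statements merged into one kernel-verified Lean document; each statement's English description precedes it below -/
import Mathlib

section
/- Let {X_n} be a stationary ergodic binary process. Define λ_0 = 1 and recursively τ_k = min{t > 0 : X_{-λ_{k-1}-t}^{-1-t} = X_{-λ_{k-1}}^{-1}} and λ_k = τ_k + λ_{k-1}. Then for every k ≥ 1, the conditional distribution identity P(X_{-τ_k} = 1 | X_{-λ_{k-1}}^{-1}) = P(X_0 = 1 | X_{-λ_{k-1}}^{-1}) holds almost surely. -/
open MeasureTheory Filter

noncomputable section

instance : MeasurableSpace (Option Bool) := ⊤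

/-- Sample space of two-sided binary sequences. -/
abbrev Om : Type := ℤ → Bool

/-- The left shift. -/
def shift : Om → Om := fun ω n => ω (n + 1)

/-- The random lengths `λ_k`: `λ_0 = 1`, `λ_k = λ_{k-1} + τ_k` where `τ_k` is the
backward return time of the pattern `X_{-λ_{k-1}}^{-1}`. -/
def lam (ω : Om) : ℕ → ℕ
  | 0 => 1
  | k + 1 => lam ω k +
      sInf {t : ℕ | 0 < t ∧ ∀ i : ℕ, i < lam ω k → ω (-1 - (t : ℤ) - (i : ℤ)) = ω (-1 - (i : ℤ))}

/-- The return times `τ_k` (`k ≥ 1`). -/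
def tauk (ω : Om) (k : ℕ) : ℕ :=
  sInf {t : ℕ | 0 < t ∧ ∀ i : ℕ, i < lam ω (k - 1) → ω (-1 - (t : ℤ) - (i : ℤ)) = ω (-1 - (i : ℤ))}

/-- The (random-length) observed pattern `X_{-λ_k}^{-1}`, encoded so that the σ-algebra it
generates records both the length `λ_k` and the pattern values. -/
def blockMap (k : ℕ) (ω : Om) : ℕ → Option Bool :=
  fun i => if i < lam ω k then some (ω (-1 - (i : ℤ))) else none


namespace Stmt0Aux


instance : MeasurableSingletonClass (Option Bool) := ⟨fun _ => trivial⟩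

def shiftInv : Om → Om := fun ω n => ω (n - 1)

lemma shift_iter (t : ℕ) (ω : Om) (n : ℤ) : (shift^[t]) ω n = ω (n + t) := by
  induction t generalizing n with
  | zero => simp
  | succ t ih =>
    rw [Function.iterate_succ_apply', shift, ih]
    congr 1; push_cast; ring

lemma shiftInv_iter (t : ℕ) (ω : Om) (n : ℤ) : (shiftInv^[t]) ω n = ω (n - t) := by
  induction t generalizing n with
  | zero => simp
  | succ t ih =>
    rw [Function.iterate_succ_apply', shiftInv, ih]
    congr 1; push_cast; ring

lemma meas_coord (j : ℤ) : Measurable fun ω : Om => ω j := measurable_pi_apply j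

lemma measurable_shift : Measurable shift :=
  measurable_pi_lambda _ fun n => meas_coord (n + 1)

lemma measurable_shiftInv : Measurable shiftInv :=
  measurable_pi_lambda _ fun n => meas_coord (n - 1)

lemma measurePreserving_shiftInv {μ : Measure Om} (hstat : MeasurePreserving shift μ μ) :
    MeasurePreserving shiftInv μ μ := by
  refine ⟨measurable_shiftInv, ?_⟩
  ext s hs
  rw [Measure.map_apply measurable_shiftInv hs]
  have h2 : shift ⁻¹' (shiftInv ⁻¹' s) = s := by
    ext ω
    simp only [Set.mem_preimage]
    have : shiftInv (shift ω) = ω := by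
      funext n; simp [shiftInv, shift]
    rw [this]
  have := hstat.measure_preimage (measurable_shiftInv hs).nullMeasurableSet
  rw [h2] at this
  exact this.symm

lemma measurableSet_eqcoord (a b : ℤ) : MeasurableSet {ω : Om | ω a = ω b} := by
  have : {ω : Om | ω a = ω b} = ⋃ c : Bool, ({ω | ω a = c} ∩ {ω | ω b = c}) := by
    ext ω; simp only [Set.mem_setOf_eq, Set.mem_iUnion, Set.mem_inter_iff]
    constructor
    · intro h; exact ⟨ω b, h, rfl⟩
    · rintro ⟨c, h1, h2⟩; rw [h1, h2]
  rw [this]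
  exact MeasurableSet.iUnion fun c =>
    ((meas_coord a (MeasurableSet.singleton c)).inter (meas_coord b (MeasurableSet.singleton c)))

lemma meas_sInf {P : ℕ → Om → Prop} (h : ∀ t, MeasurableSet {ω | P t ω}) :
    Measurable fun ω => sInf {t | P t ω} := by
  apply measurable_to_countable'
  intro n
  rcases Nat.eq_zero_or_pos n with hn | hn
  · subst hn
    have : (fun ω => sInf {t | P t ω}) ⁻¹' {0}
        = {ω | P 0 ω} ∪ ⋂ t, {ω | P t ω}ᶜ := by
      ext ω
      simp only [Set.mem_preimage, Set.mem_singleton_iff, Set.mem_union, Set.mem_iInter,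
        Set.mem_compl_iff, Set.mem_setOf_eq, Nat.sInf_eq_zero]
      constructor
      · rintro (h0 | he)
        · exact Or.inl h0
        · exact Or.inr fun t ht => by simp [Set.eq_empty_iff_forall_notMem] at he; exact he t ht
      · rintro (h0 | he)
        · exact Or.inl h0
        · exact Or.inr (Set.eq_empty_iff_forall_notMem.2 he)
    rw [this]
    exact (h 0).union (MeasurableSet.iInter fun t => (h t).compl)
  · have : (fun ω => sInf {t | P t ω}) ⁻¹' {n}
        = {ω | P n ω} ∩ ⋂ m, ⋂ (_ : m < n), {ω | P m ω}ᶜ := by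
      ext ω
      simp only [Set.mem_preimage, Set.mem_singleton_iff, Set.mem_inter_iff, Set.mem_iInter,
        Set.mem_compl_iff, Set.mem_setOf_eq]
      constructor
      · intro hs
        have hne : {t | P t ω}.Nonempty := by
          by_contra hemp
          rw [Set.not_nonempty_iff_eq_empty] at hemp
          rw [hemp, Nat.sInf_empty] at hs; omega
        have := Nat.sInf_mem hne
        rw [hs] at this
        exact ⟨this, fun m hm hPm => by
          have := Nat.sInf_le (s := {t | P t ω}) hPm
          omega⟩
      · rintro ⟨hPn, hmin⟩
        refine le_antisymm (Nat.sInf_le hPn) ?_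
        by_contra hlt
        push_neg at hlt
        have hne : {t | P t ω}.Nonempty := ⟨n, hPn⟩
        have hmem := Nat.sInf_mem hne
        exact hmin _ hlt hmem
    rw [this]
    exact (h n).inter (MeasurableSet.iInter fun m => MeasurableSet.iInter fun _ => (h m).compl)





/-- backward-match candidate set -/
def SB (ω : Om) (L : ℕ) : Set ℕ :=
  {t : ℕ | 0 < t ∧ ∀ i : ℕ, i < L → ω (-1 - (t : ℤ) - (i : ℤ)) = ω (-1 - (i : ℤ))}

/-- forward-match candidate set -/
def SF (ω : Om) (L : ℕ) : Set ℕ :=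
  {t : ℕ | 0 < t ∧ ∀ i : ℕ, i < L → ω ((t : ℤ) - 1 - (i : ℤ)) = ω (-1 - (i : ℤ))}

lemma lam_succ (ω : Om) (j : ℕ) : lam ω (j + 1) = lam ω j + sInf (SB ω (lam ω j)) := rfl

lemma tauk_eq (ω : Om) (k : ℕ) : tauk ω k = sInf (SB ω (lam ω (k - 1))) := rfl

/-- forward return time -/
def Rk (k : ℕ) (ω : Om) : ℕ := sInf (SF ω (lam ω (k - 1)))


-- generic: {ω | ∀ i < f ω, ω ∈ Q i} measurable when f measurable
lemma measurableSet_ball {f : Om → ℕ} (hf : Measurable f) (Q : ℕ → Set Om)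
    (hQ : ∀ i, MeasurableSet (Q i)) :
    MeasurableSet {ω : Om | ∀ i : ℕ, i < f ω → ω ∈ Q i} := by
  have : {ω : Om | ∀ i : ℕ, i < f ω → ω ∈ Q i}
      = ⋂ i : ℕ, ({ω | f ω ≤ i} ∪ Q i) := by
    ext ω
    simp only [Set.mem_setOf_eq, Set.mem_iInter, Set.mem_union]
    constructor
    · intro h i
      rcases le_or_gt (f ω) i with hle | hlt
      · exact Or.inl hle
      · exact Or.inr (h i hlt)
    · intro h i hi
      rcases h i with h' | h'
      · omega
      · exact h'
  rw [this]
  refine MeasurableSet.iInter fun i => MeasurableSet.union ?_ (hQ i)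
  exact hf (show MeasurableSet {n : ℕ | n ≤ i} from trivial)

lemma measurableSet_SB_mem {f : Om → ℕ} (hf : Measurable f) (t : ℕ) :
    MeasurableSet {ω : Om | t ∈ SB ω (f ω)} := by
  have : {ω : Om | t ∈ SB ω (f ω)} =
      {ω : Om | 0 < t} ∩ {ω : Om | ∀ i : ℕ, i < f ω →
        ω ∈ {ω' : Om | ω' (-1 - (t : ℤ) - (i : ℤ)) = ω' (-1 - (i : ℤ))}} := by
    ext ω; rfl
  rw [this]
  refine MeasurableSet.inter ?_ (measurableSet_ball hf _ fun i => measurableSet_eqcoord _ _)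
  by_cases h : 0 < t
  · simp [h]
  · simp [h]

lemma measurableSet_SF_mem {f : Om → ℕ} (hf : Measurable f) (t : ℕ) :
    MeasurableSet {ω : Om | t ∈ SF ω (f ω)} := by
  have : {ω : Om | t ∈ SF ω (f ω)} =
      {ω : Om | 0 < t} ∩ {ω : Om | ∀ i : ℕ, i < f ω →
        ω ∈ {ω' : Om | ω' ((t : ℤ) - 1 - (i : ℤ)) = ω' (-1 - (i : ℤ))}} := by
    ext ω; rfl
  rw [this]
  refine MeasurableSet.inter ?_ (measurableSet_ball hf _ fun i => measurableSet_eqcoord _ _)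
  by_cases h : 0 < t
  · simp [h]
  · simp [h]

lemma measurable_lam (j : ℕ) : Measurable fun ω => lam ω j := by
  induction j with
  | zero => exact measurable_const
  | succ j ih =>
    have h1 : Measurable fun ω => sInf (SB ω (lam ω j)) := by
      have := meas_sInf (P := fun t ω => t ∈ SB ω (lam ω j))
        (fun t => measurableSet_SB_mem ih t)
      convert this using 2
      rfl
    exact ih.add h1

lemma measurable_tauk (k : ℕ) : Measurable fun ω => tauk ω k := by
  have := meas_sInf (P := fun t ω => t ∈ SB ω (lam ω (k - 1)))
    (fun t => measurableSet_SB_mem (measurable_lam (k - 1)) t)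
  convert this using 2
  rfl

lemma measurable_Rk (k : ℕ) : Measurable (Rk k) := by
  have := meas_sInf (P := fun t ω => t ∈ SF ω (lam ω (k - 1)))
    (fun t => measurableSet_SF_mem (measurable_lam (k - 1)) t)
  convert this using 2
  rfl

lemma measurable_blockMap (k : ℕ) : Measurable (blockMap k) := by
  apply measurable_pi_lambda
  intro i
  apply measurable_to_countable'
  intro y
  match y with
  | none =>
    have : (fun ω => blockMap k ω i) ⁻¹' {none} = {ω : Om | lam ω k ≤ i} := by
      ext ω
      simp only [Set.mem_preimage, Set.mem_singleton_iff, blockMap, Set.mem_setOf_eq]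
      by_cases h : i < lam ω k <;> simp [h] <;> omega
    rw [this]
    exact measurable_lam k (show MeasurableSet {n : ℕ | n ≤ i} from trivial)
  | some b =>
    have : (fun ω => blockMap k ω i) ⁻¹' {some b}
        = {ω : Om | i < lam ω k} ∩ {ω : Om | ω (-1 - (i : ℤ)) = b} := by
      ext ω
      simp only [Set.mem_preimage, Set.mem_singleton_iff, blockMap, Set.mem_inter_iff,
        Set.mem_setOf_eq]
      by_cases h : i < lam ω k <;> simp [h]
    rw [this]
    exact MeasurableSet.inter
      (measurable_lam k (show MeasurableSet {n : ℕ | i < n} from trivial))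
      (meas_coord _ (MeasurableSet.singleton b))



/-- Good up to stage m: all backward-match sets are nonempty. -/
def Good (m : ℕ) (ω : Om) : Prop := ∀ j < m, (SB ω (lam ω j)).Nonempty

lemma lam_mono (ω : Om) : Monotone (lam ω) := by
  apply monotone_nat_of_le_succ
  intro j
  rw [lam_succ]
  omega

lemma lam_congr (ω ω' : Om) (m : ℕ) (hg : Good m ω)
    (h : ∀ i : ℕ, i < lam ω m → ω' (-1 - (i : ℤ)) = ω (-1 - (i : ℤ))) :
    ∀ j, j ≤ m → lam ω' j = lam ω j := by
  intro j
  induction j with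
  | zero => intro _; rfl
  | succ j ih =>
    intro hj1
    have hj : j ≤ m := le_trans (Nat.le_succ j) hj1
    have hL : lam ω' j = lam ω j := ih hj
    set L := lam ω j with hLdef
    have hLm : lam ω (j + 1) ≤ lam ω m := lam_mono ω hj1
    have hne : (SB ω L).Nonempty := hg j (lt_of_lt_of_le (Nat.lt_succ_self j) hj1)
    set τ := sInf (SB ω L) with hτdef
    have hτmem : τ ∈ SB ω L := Nat.sInf_mem hne
    obtain ⟨hτpos, hτmatch⟩ := hτmem
    have hsum : L + τ = lam ω (j + 1) := (lam_succ ω j).symm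
    -- transfer of membership for lags t ≤ τ
    have htrans : ∀ t : ℕ, t ≤ τ → (t ∈ SB ω' L ↔ t ∈ SB ω L) := by
      intro t htτ
      have hkey : ∀ i : ℕ, i < L → ω' (-1 - (t : ℤ) - (i : ℤ)) = ω (-1 - (t : ℤ) - (i : ℤ)) := by
        intro i hi
        have h1 : t + i < lam ω m := by omega
        have := h (t + i) h1
        have hcast : (-1 : ℤ) - ((t + i : ℕ) : ℤ) = -1 - (t : ℤ) - (i : ℤ) := by push_cast; ring
        rwa [hcast] at this
      have hkey2 : ∀ i : ℕ, i < L → ω' (-1 - (i : ℤ)) = ω (-1 - (i : ℤ)) := by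
        intro i hi
        exact h i (by omega)
      constructor
      · rintro ⟨ht, hmatch⟩
        exact ⟨ht, fun i hi => by rw [← hkey i hi, ← hkey2 i hi]; exact hmatch i hi⟩
      · rintro ⟨ht, hmatch⟩
        exact ⟨ht, fun i hi => by rw [hkey i hi, hkey2 i hi]; exact hmatch i hi⟩
    have hsInf' : sInf (SB ω' L) = τ := by
      have hτ' : τ ∈ SB ω' L := (htrans τ le_rfl).2 ⟨hτpos, hτmatch⟩
      refine le_antisymm (Nat.sInf_le hτ') ?_
      by_contra hlt
      push_neg at hlt
      have hne' : (SB ω' L).Nonempty := ⟨τ, hτ'⟩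
      have hmem' := Nat.sInf_mem hne'
      have : sInf (SB ω' L) ∈ SB ω L := (htrans _ (le_of_lt hlt)).1 hmem'
      have := Nat.sInf_le this
      omega
    rw [lam_succ ω' j, hL, hsInf']
    exact hsum

lemma blockMap_congr {ω ω' : Om} {K : ℕ} (hlam : lam ω' K = lam ω K)
    (h : ∀ i : ℕ, i < lam ω K → ω' (-1 - (i : ℤ)) = ω (-1 - (i : ℤ))) :
    blockMap K ω' = blockMap K ω := by
  funext i
  unfold blockMap
  rw [hlam]
  by_cases hi : i < lam ω K
  · simp only [hi, if_true, h i hi]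
  · simp [hi]

/-- (a): from backward return of the shifted point to forward return of the base point. -/
lemma front_of_back (K t : ℕ) (ht : 0 < t) (ω : Om) (hgs : Good K (shift^[t] ω))
    (hτ : sInf (SB (shift^[t] ω) (lam (shift^[t] ω) K)) = t) :
    blockMap K (shift^[t] ω) = blockMap K ω ∧ sInf (SF ω (lam ω K)) = t := by
  set ω₂ := shift^[t] ω with hω₂
  set L := lam ω₂ K with hLdef
  have hne : (SB ω₂ L).Nonempty := by
    by_contra hemp
    rw [Set.not_nonempty_iff_eq_empty] at hemp
    rw [hemp, Nat.sInf_empty] at hτ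
    omega
  have hmem : t ∈ SB ω₂ L := by rw [← hτ]; exact Nat.sInf_mem hne
  obtain ⟨-, hmatch⟩ := hmem
  -- hmatch : ∀ i < L, ω₂ (-1 - t - i) = ω₂ (-1 - i)
  have hc : ∀ z : ℤ, ω₂ z = ω (z + t) := fun z => shift_iter t ω z
  -- (A) : ∀ i < L, ω (-1 - i) = ω (t - 1 - i)
  have hA : ∀ i : ℕ, i < L → ω (-1 - (i : ℤ)) = ω ((t : ℤ) - 1 - (i : ℤ)) := by
    intro i hi
    have h1 := hmatch i hi
    rw [hc, hc] at h1
    have e1 : (-1 : ℤ) - (t : ℤ) - (i : ℤ) + t = -1 - (i : ℤ) := by ring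
    have e2 : (-1 : ℤ) - (i : ℤ) + t = (t : ℤ) - 1 - (i : ℤ) := by ring
    rw [e1, e2] at h1
    exact h1
  have hwin : ∀ i : ℕ, i < lam ω₂ K → ω (-1 - (i : ℤ)) = ω₂ (-1 - (i : ℤ)) := by
    intro i hi
    rw [hc]
    have e2 : (-1 : ℤ) - (i : ℤ) + t = (t : ℤ) - 1 - (i : ℤ) := by ring
    rw [e2]
    exact hA i hi
  have hlam : lam ω K = L := lam_congr ω₂ ω K hgs hwin K le_rfl
  have hvals : ∀ i : ℕ, i < lam ω K → ω₂ (-1 - (i : ℤ)) = ω (-1 - (i : ℤ)) := by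
    intro i hi
    exact (hwin i (by rwa [← hLdef, ← hlam])).symm
  have hbm : blockMap K ω₂ = blockMap K ω := blockMap_congr (by rw [hlam, hLdef]) hvals
  refine ⟨hbm, ?_⟩
  -- now show sInf (SF ω (lam ω K)) = t
  rw [hlam]
  have htmem : t ∈ SF ω L := by
    exact ⟨ht, fun i hi => (hA i hi).symm⟩
  refine le_antisymm (Nat.sInf_le htmem) ?_
  by_contra hlt
  push_neg at hlt
  have hne' : (SF ω L).Nonempty := ⟨t, htmem⟩
  set t' := sInf (SF ω L) with ht'def
  have hmem' : t' ∈ SF ω L := Nat.sInf_mem hne'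
  obtain ⟨ht'pos, ht'match⟩ := hmem'
  -- then t - t' ∈ SB ω₂ L with t - t' < t, contradiction with hτ
  have hsub : (t - t' : ℕ) ∈ SB ω₂ L := by
    refine ⟨by omega, ?_⟩
    intro i hi
    have hcast : ((t - t' : ℕ) : ℤ) = (t : ℤ) - (t' : ℤ) := by
      rw [Nat.cast_sub (by omega)]
    rw [hc, hc, hcast]
    have e1 : (-1 : ℤ) - ((t : ℤ) - (t' : ℤ)) - (i : ℤ) + t = (t' : ℤ) - 1 - (i : ℤ) := by ring
    have e2 : (-1 : ℤ) - (i : ℤ) + t = (t : ℤ) - 1 - (i : ℤ) := by ring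
    rw [e1, e2, ht'match i hi, hA i hi]
  have := Nat.sInf_le hsub
  omega

/-- (b): from forward return of the base point to backward return of the shifted point. -/
lemma back_of_front (K t : ℕ) (ht : 0 < t) (ω : Om) (hgω : Good K ω)
    (hR : sInf (SF ω (lam ω K)) = t) :
    blockMap K (shift^[t] ω) = blockMap K ω ∧
      sInf (SB (shift^[t] ω) (lam (shift^[t] ω) K)) = t := by
  set ω₂ := shift^[t] ω with hω₂
  set L := lam ω K with hLdef
  have hc : ∀ z : ℤ, ω₂ z = ω (z + t) := fun z => shift_iter t ω z
  have hne : (SF ω L).Nonempty := by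
    by_contra hemp
    rw [Set.not_nonempty_iff_eq_empty] at hemp
    rw [hemp, Nat.sInf_empty] at hR
    omega
  have hmem : t ∈ SF ω L := by rw [← hR]; exact Nat.sInf_mem hne
  obtain ⟨-, hmatchF⟩ := hmem
  -- hmatchF : ∀ i < L, ω (t - 1 - i) = ω (-1 - i)
  have hwin : ∀ i : ℕ, i < lam ω K → ω₂ (-1 - (i : ℤ)) = ω (-1 - (i : ℤ)) := by
    intro i hi
    rw [hc]
    have e2 : (-1 : ℤ) - (i : ℤ) + t = (t : ℤ) - 1 - (i : ℤ) := by ring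
    rw [e2]
    exact hmatchF i (by omega)
  have hlam : lam ω₂ K = L := lam_congr ω ω₂ K hgω hwin K le_rfl
  have hbm : blockMap K ω₂ = blockMap K ω := blockMap_congr (by rw [hlam]) hwin
  refine ⟨hbm, ?_⟩
  rw [hlam]
  have htmem : t ∈ SB ω₂ L := by
    refine ⟨ht, ?_⟩
    intro i hi
    rw [hc, hc]
    have e1 : (-1 : ℤ) - (t : ℤ) - (i : ℤ) + t = -1 - (i : ℤ) := by ring
    have e2 : (-1 : ℤ) - (i : ℤ) + t = (t : ℤ) - 1 - (i : ℤ) := by ring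
    rw [e1, e2, hmatchF i hi]
  refine le_antisymm (Nat.sInf_le htmem) ?_
  by_contra hlt
  push_neg at hlt
  have hne' : (SB ω₂ L).Nonempty := ⟨t, htmem⟩
  set s' := sInf (SB ω₂ L) with hs'def
  have hmem' : s' ∈ SB ω₂ L := Nat.sInf_mem hne'
  obtain ⟨hs'pos, hs'match⟩ := hmem'
  have hsub : (t - s' : ℕ) ∈ SF ω L := by
    refine ⟨by omega, ?_⟩
    intro i hi
    have h1 := hs'match i hi
    rw [hc, hc] at h1
    have hcast : ((t - s' : ℕ) : ℤ) = (t : ℤ) - (s' : ℤ) := by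
      rw [Nat.cast_sub (by omega)]
    rw [hcast]
    have e1 : (-1 : ℤ) - (s' : ℤ) - (i : ℤ) + t = (t : ℤ) - (s' : ℤ) - 1 - (i : ℤ) := by ring
    have e2 : (-1 : ℤ) - (i : ℤ) + t = (t : ℤ) - 1 - (i : ℤ) := by ring
    rw [e1, e2] at h1
    rw [h1, hmatchF i hi]
  have := Nat.sInf_le hsub
  omega



/-- finite cylinder on negative coordinates -/
def Cyl (L : ℕ) (v : Fin L → Bool) : Set Om :=
  {ω | ∀ i : Fin L, ω (-1 - ((i : ℕ) : ℤ)) = v i}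

lemma measurableSet_Cyl (L : ℕ) (v : Fin L → Bool) : MeasurableSet (Cyl L v) := by
  have : Cyl L v = ⋂ i : Fin L, (fun ω : Om => ω (-1 - ((i : ℕ) : ℤ))) ⁻¹' {v i} := by
    ext ω; simp [Cyl]
  rw [this]
  exact MeasurableSet.iInter fun i => meas_coord _ (MeasurableSet.singleton _)

lemma null_no_backward {μ : Measure Om} [IsProbabilityMeasure μ]
    (hstat : MeasurePreserving shift μ μ) (j : ℕ) :
    μ {ω : Om | ¬ (SB ω (lam ω j)).Nonempty} = 0 := by
  have hc : Conservative shiftInv μ := (measurePreserving_shiftInv hstat).conservative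
  have hsub : {ω : Om | ¬ (SB ω (lam ω j)).Nonempty} ⊆
      ⋃ (L : ℕ), ⋃ (v : Fin L → Bool),
        {x ∈ Cyl L v | ∀ m ≥ 1, shiftInv^[m] x ∉ Cyl L v} := by
    intro ω hω
    simp only [Set.mem_setOf_eq, Set.not_nonempty_iff_eq_empty] at hω
    refine Set.mem_iUnion.2 ⟨lam ω j, Set.mem_iUnion.2
      ⟨fun i => ω (-1 - ((i : ℕ) : ℤ)), ?_, ?_⟩⟩
    · intro i; rfl
    · intro m hm hmem
      have hmmem : m ∈ SB ω (lam ω j) := by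
        refine ⟨hm, ?_⟩
        intro i hi
        have := hmem ⟨i, hi⟩
        rw [shiftInv_iter] at this
        have e : (-1 : ℤ) - (i : ℤ) - (m : ℤ) = -1 - (m : ℤ) - (i : ℤ) := by ring
        rw [e] at this
        exact this
      rw [hω] at hmmem
      exact hmmem
  refine measure_mono_null hsub ?_
  refine measure_iUnion_null fun L => measure_iUnion_null fun v => ?_
  exact hc.measure_mem_forall_ge_image_notMem_eq_zero
    (measurableSet_Cyl L v).nullMeasurableSet 1

lemma null_no_forward {μ : Measure Om} [IsProbabilityMeasure μ]
    (hstat : MeasurePreserving shift μ μ) (j : ℕ) :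
    μ {ω : Om | ¬ (SF ω (lam ω j)).Nonempty} = 0 := by
  have hc : Conservative shift μ := hstat.conservative
  have hsub : {ω : Om | ¬ (SF ω (lam ω j)).Nonempty} ⊆
      ⋃ (L : ℕ), ⋃ (v : Fin L → Bool),
        {x ∈ Cyl L v | ∀ m ≥ 1, shift^[m] x ∉ Cyl L v} := by
    intro ω hω
    simp only [Set.mem_setOf_eq, Set.not_nonempty_iff_eq_empty] at hω
    refine Set.mem_iUnion.2 ⟨lam ω j, Set.mem_iUnion.2
      ⟨fun i => ω (-1 - ((i : ℕ) : ℤ)), ?_, ?_⟩⟩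
    · intro i; rfl
    · intro m hm hmem
      have hmmem : m ∈ SF ω (lam ω j) := by
        refine ⟨hm, ?_⟩
        intro i hi
        have := hmem ⟨i, hi⟩
        rw [shift_iter] at this
        have e : (-1 : ℤ) - (i : ℤ) + (m : ℤ) = (m : ℤ) - 1 - (i : ℤ) := by ring
        rw [e] at this
        exact this
      rw [hω] at hmmem
      exact hmmem
  refine measure_mono_null hsub ?_
  refine measure_iUnion_null fun L => measure_iUnion_null fun v => ?_
  exact hc.measure_mem_forall_ge_image_notMem_eq_zero
    (measurableSet_Cyl L v).nullMeasurableSet 1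



lemma measurableSet_nonemptySB (j : ℕ) :
    MeasurableSet {ω : Om | (SB ω (lam ω j)).Nonempty} := by
  have : {ω : Om | (SB ω (lam ω j)).Nonempty} = ⋃ t : ℕ, {ω | t ∈ SB ω (lam ω j)} := by
    ext ω; simp [Set.Nonempty]
  rw [this]
  exact MeasurableSet.iUnion fun t => measurableSet_SB_mem (measurable_lam j) t

lemma measurableSet_nonemptySF (j : ℕ) :
    MeasurableSet {ω : Om | (SF ω (lam ω j)).Nonempty} := by
  have : {ω : Om | (SF ω (lam ω j)).Nonempty} = ⋃ t : ℕ, {ω | t ∈ SF ω (lam ω j)} := by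
    ext ω; simp [Set.Nonempty]
  rw [this]
  exact MeasurableSet.iUnion fun t => measurableSet_SF_mem (measurable_lam j) t

lemma measure_eq {μ : Measure Om} [IsProbabilityMeasure μ]
    (hstat : MeasurePreserving shift μ μ) (k : ℕ) (hk : 1 ≤ k)
    {S : Set (ℕ → Option Bool)} (hS : MeasurableSet S) :
    μ (blockMap (k - 1) ⁻¹' S ∩ {ω : Om | ω (-(tauk ω k : ℤ)) = true})
      = μ (blockMap (k - 1) ⁻¹' S ∩ {ω : Om | ω 0 = true}) := by
  set K := k - 1 with hKdef
  have hKk : K < k := by omega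
  set s : Set Om := blockMap K ⁻¹' S with hsdef
  have hsmeas : MeasurableSet s := measurable_blockMap K hS
  -- bad sets
  set NB : Set Om := ⋃ (j : ℕ), ⋃ (_ : j < k), {ω : Om | ¬ (SB ω (lam ω j)).Nonempty}
    with hNBdef
  have hNBmeas : MeasurableSet NB :=
    MeasurableSet.iUnion fun j => MeasurableSet.iUnion fun _ =>
      (measurableSet_nonemptySB j).compl
  have hNBnull : μ NB = 0 :=
    measure_iUnion_null fun j => measure_iUnion_null fun _ => null_no_backward hstat j
  set NF : Set Om := {ω : Om | ¬ (SF ω (lam ω K)).Nonempty} with hNFdef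
  have hNFmeas : MeasurableSet NF := (measurableSet_nonemptySF K).compl
  have hNFnull : μ NF = 0 := null_no_forward hstat K
  set Bad : Set Om := NF ∪ NB ∪ ⋃ (t : ℕ), (shift^[t]) ⁻¹' NB with hBaddef
  have hBadmeas : MeasurableSet Bad := by
    refine ((hNFmeas.union hNBmeas).union (MeasurableSet.iUnion fun t => ?_))
    exact (measurable_shift.iterate t) hNBmeas
  have hBadnull : μ Bad = 0 := by
    refine measure_union_null (measure_union_null hNFnull hNBnull) ?_
    refine measure_iUnion_null fun t => ?_
    rw [(hstat.iterate t).measure_preimage hNBmeas.nullMeasurableSet]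
    exact hNBnull
  -- good facts outside Bad
  have hGood : ∀ ω : Om, ω ∉ Bad → Good K ω := by
    intro ω hω j hj
    by_contra hc
    exact hω (Or.inl (Or.inr (Set.mem_iUnion.2 ⟨j, Set.mem_iUnion.2 ⟨by omega, hc⟩⟩)))
  have hGoodShift : ∀ (t : ℕ) (ω : Om), ω ∉ Bad → Good K (shift^[t] ω) := by
    intro t ω hω j hj
    by_contra hc
    refine hω (Or.inr (Set.mem_iUnion.2 ⟨t, ?_⟩))
    exact Set.mem_iUnion.2 ⟨j, Set.mem_iUnion.2 ⟨by omega, hc⟩⟩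
  have hτpos : ∀ ω : Om, ω ∉ Bad → 0 < tauk ω k := by
    intro ω hω
    have hne : (SB ω (lam ω K)).Nonempty := by
      by_contra hc
      exact hω (Or.inl (Or.inr (Set.mem_iUnion.2 ⟨K, Set.mem_iUnion.2 ⟨hKk, hc⟩⟩)))
    rw [tauk_eq]
    rw [← hKdef]
    exact (Nat.sInf_mem hne).1
  have hRpos : ∀ ω : Om, ω ∉ Bad → 0 < Rk k ω := by
    intro ω hω
    have hne : (SF ω (lam ω K)).Nonempty := by
      by_contra hc
      exact hω (Or.inl (Or.inl hc))
    rw [Rk, ← hKdef]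
    exact (Nat.sInf_mem hne).1
  -- the pieces
  set U : Set Om := {ω : Om | ω (-(tauk ω k : ℤ)) = true} with hUdef
  set V : Set Om := {ω : Om | ω 0 = true} with hVdef
  set A : ℕ → Set Om := fun t =>
    if t = 0 then ∅ else
      (s ∩ {ω : Om | tauk ω k = t} ∩ {ω : Om | ω (-(t : ℤ)) = true}) \ Bad with hAdef
  set A' : ℕ → Set Om := fun t =>
    if t = 0 then ∅ else
      (s ∩ {ω : Om | Rk k ω = t} ∩ {ω : Om | ω 0 = true}) \ Bad with hA'def
  have hAmeas : ∀ t, MeasurableSet (A t) := by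
    intro t
    rcases eq_or_ne t 0 with h | h
    · simp [hAdef, h]
    · simp only [hAdef, h, if_neg h]
      exact (((hsmeas.inter (measurable_tauk k (MeasurableSet.singleton t))).inter
        (meas_coord _ (MeasurableSet.singleton true)))).diff hBadmeas
  have hA'meas : ∀ t, MeasurableSet (A' t) := by
    intro t
    rcases eq_or_ne t 0 with h | h
    · simp [hA'def, h]
    · simp only [hA'def, if_neg h]
      exact (((hsmeas.inter (measurable_Rk k (MeasurableSet.singleton t))).inter
        (meas_coord _ (MeasurableSet.singleton true)))).diff hBadmeas
  have hAdisj : Pairwise (Function.onFun Disjoint A) := by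
    intro a b hab
    simp only [Function.onFun, Set.disjoint_left]
    intro ω hωa hωb
    rcases eq_or_ne a 0 with h | h
    · simp [hAdef, h] at hωa
    rcases eq_or_ne b 0 with h' | h'
    · simp [hAdef, h'] at hωb
    simp only [hAdef, if_neg h, if_neg h'] at hωa hωb
    exact hab (hωa.1.1.2.symm.trans hωb.1.1.2)
  have hA'disj : Pairwise (Function.onFun Disjoint A') := by
    intro a b hab
    simp only [Function.onFun, Set.disjoint_left]
    intro ω hωa hωb
    rcases eq_or_ne a 0 with h | h
    · simp [hA'def, h] at hωa
    rcases eq_or_ne b 0 with h' | h'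
    · simp [hA'def, h'] at hωb
    simp only [hA'def, if_neg h, if_neg h'] at hωa hωb
    exact hab (hωa.1.1.2.symm.trans hωb.1.1.2)
  have hUnionA : (⋃ t, A t) = (s ∩ U) \ Bad := by
    ext ω
    constructor
    · intro hω
      obtain ⟨t, ht⟩ := Set.mem_iUnion.1 hω
      rcases eq_or_ne t 0 with h | h
      · simp [hAdef, h] at ht
      simp only [hAdef, if_neg h] at ht
      obtain ⟨⟨⟨h1, h2⟩, h3⟩, h4⟩ := ht
      refine ⟨⟨h1, ?_⟩, h4⟩
      rw [hUdef]
      simp only [Set.mem_setOf_eq] at h2 h3 ⊢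
      rw [h2]
      exact h3
    · rintro ⟨⟨h1, h2⟩, h3⟩
      refine Set.mem_iUnion.2 ⟨tauk ω k, ?_⟩
      have hpos := hτpos ω h3
      simp only [hAdef, if_neg (by omega : ¬ tauk ω k = 0)]
      exact ⟨⟨⟨h1, rfl⟩, h2⟩, h3⟩
  have hUnionA' : (⋃ t, A' t) = (s ∩ V) \ Bad := by
    ext ω
    constructor
    · intro hω
      obtain ⟨t, ht⟩ := Set.mem_iUnion.1 hω
      rcases eq_or_ne t 0 with h | h
      · simp [hA'def, h] at ht
      simp only [hA'def, if_neg h] at ht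
      exact ⟨⟨ht.1.1.1, ht.1.2⟩, ht.2⟩
    · rintro ⟨⟨h1, h2⟩, h3⟩
      refine Set.mem_iUnion.2 ⟨Rk k ω, ?_⟩
      have hpos := hRpos ω h3
      simp only [hA'def, if_neg (by omega : ¬ Rk k ω = 0)]
      exact ⟨⟨⟨h1, rfl⟩, h2⟩, h3⟩
  -- per-piece measure equality
  have hAA' : ∀ t, μ (A t) = μ (A' t) := by
    intro t
    rcases eq_or_ne t 0 with h | h
    · simp [hAdef, hA'def, h]
    have ht : 0 < t := by omega
    set X : Set Om := s ∩ {ω : Om | tauk ω k = t} ∩ {ω : Om | ω (-(t : ℤ)) = true} with hXdef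
    have hXmeas : MeasurableSet X :=
      (hsmeas.inter (measurable_tauk k (MeasurableSet.singleton t))).inter
        (meas_coord _ (MeasurableSet.singleton true))
    set Y : Set Om := s ∩ {ω : Om | Rk k ω = t} ∩ {ω : Om | ω 0 = true} with hYdef
    have key : ((shift^[t]) ⁻¹' X) \ Bad = Y \ Bad := by
      ext ω
      simp only [Set.mem_diff, Set.mem_preimage]
      constructor
      · rintro ⟨hX, hnb⟩
        rw [hXdef] at hX
        obtain ⟨⟨h1, h2⟩, h3⟩ := hX
        simp only [Set.mem_setOf_eq] at h2 h3
        have hgs : Good K (shift^[t] ω) := hGoodShift t ω hnb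
        have h2' : sInf (SB (shift^[t] ω) (lam (shift^[t] ω) K)) = t := by
          rw [← tauk_eq (shift^[t] ω) k] at *
          exact h2
        obtain ⟨hbm, hR⟩ := front_of_back K t ht ω hgs h2'
        refine ⟨⟨⟨?_, ?_⟩, ?_⟩, hnb⟩
        · rw [hsdef] at h1 ⊢
          simp only [Set.mem_preimage] at h1 ⊢
          rwa [hbm] at h1
        · simp only [Set.mem_setOf_eq]
          rw [Rk, ← hKdef]
          exact hR
        · simp only [Set.mem_setOf_eq]
          rw [shift_iter] at h3
          simpa using h3
      · rintro ⟨hY, hnb⟩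
        rw [hYdef] at hY
        obtain ⟨⟨h1, h2⟩, h3⟩ := hY
        simp only [Set.mem_setOf_eq] at h2 h3
        have hgω : Good K ω := hGood ω hnb
        have h2' : sInf (SF ω (lam ω K)) = t := by
          rw [Rk, ← hKdef] at h2
          exact h2
        obtain ⟨hbm, hτ⟩ := back_of_front K t ht ω hgω h2'
        refine ⟨⟨⟨?_, ?_⟩, ?_⟩, hnb⟩
        · rw [hsdef] at h1 ⊢
          simp only [Set.mem_preimage] at h1 ⊢
          rwa [← hbm] at h1
        · simp only [Set.mem_setOf_eq]
          rw [tauk_eq, ← hKdef]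
          exact hτ
        · simp only [Set.mem_setOf_eq]
          rw [shift_iter]
          simpa using h3
    have e1 : μ (A t) = μ X := by
      simp only [hAdef, if_neg h]
      exact measure_diff_null hBadnull
    have e2 : μ X = μ ((shift^[t]) ⁻¹' X) :=
      ((hstat.iterate t).measure_preimage hXmeas.nullMeasurableSet).symm
    have e3 : μ ((shift^[t]) ⁻¹' X) = μ (((shift^[t]) ⁻¹' X) \ Bad) :=
      (measure_diff_null hBadnull).symm
    have e4 : μ (Y \ Bad) = μ (A' t) := by
      simp only [hA'def, if_neg h]
      rfl
    rw [e1, e2, e3, key, e4]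
  calc μ (s ∩ U) = μ ((s ∩ U) \ Bad) := (measure_diff_null hBadnull).symm
    _ = μ (⋃ t, A t) := by rw [hUnionA]
    _ = ∑' t, μ (A t) := measure_iUnion hAdisj hAmeas
    _ = ∑' t, μ (A' t) := tsum_congr hAA'
    _ = μ (⋃ t, A' t) := (measure_iUnion hA'disj hA'meas).symm
    _ = μ ((s ∩ V) \ Bad) := by rw [hUnionA']
    _ = μ (s ∩ V) := measure_diff_null hBadnull


end Stmt0Aux

open Stmt0Aux in
/-- for a stationary ergodic binary process, for each `k ≥ 1`,
`P(X_{-τ_k} = 1 | X_{-λ_{k-1}}^{-1}) = P(X_0 = 1 | X_{-λ_{k-1}}^{-1})` almost surely. -/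
theorem stmt0 (μ : Measure Om) [IsProbabilityMeasure μ]
    (hstat : MeasurePreserving shift μ μ) (herg : Ergodic shift μ)
    (k : ℕ) (hk : 1 ≤ k) :
    μ[(fun ω => if ω (-(tauk ω k : ℤ)) = true then (1 : ℝ) else 0) |
        MeasurableSpace.comap (blockMap (k - 1)) inferInstance]
      =ᵐ[μ]
    μ[(fun ω => if ω 0 = true then (1 : ℝ) else 0) |
        MeasurableSpace.comap (blockMap (k - 1)) inferInstance] := by
  have hm : MeasurableSpace.comap (blockMap (k - 1)) inferInstance
      ≤ (inferInstance : MeasurableSpace Om) := (measurable_blockMap (k - 1)).comap_le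
  set U : Set Om := {ω : Om | ω (-(tauk ω k : ℤ)) = true} with hUdef
  set V : Set Om := {ω : Om | ω 0 = true} with hVdef
  have hUmeas : MeasurableSet U := by
    have : U = ⋃ t : ℕ, ({ω : Om | tauk ω k = t} ∩ {ω : Om | ω (-(t : ℤ)) = true}) := by
      ext ω
      simp only [hUdef, Set.mem_setOf_eq, Set.mem_iUnion, Set.mem_inter_iff]
      constructor
      · intro h; exact ⟨tauk ω k, rfl, h⟩
      · rintro ⟨t, ht, h⟩; rw [ht]; exact h
    rw [this]
    exact MeasurableSet.iUnion fun t =>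
      (measurable_tauk k (MeasurableSet.singleton t)).inter
        (meas_coord _ (MeasurableSet.singleton true))
  have hVmeas : MeasurableSet V := meas_coord 0 (MeasurableSet.singleton true)
  have hf₁eq : (fun ω : Om => if ω (-(tauk ω k : ℤ)) = true then (1 : ℝ) else 0)
      = U.indicator (fun _ => (1 : ℝ)) := by
    funext ω
    by_cases h : ω (-(tauk ω k : ℤ)) = true
    · simp [Set.indicator, hUdef, h]
    · simp [Set.indicator, hUdef, h]
  have hf₂eq : (fun ω : Om => if ω 0 = true then (1 : ℝ) else 0)
      = V.indicator (fun _ => (1 : ℝ)) := by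
    funext ω
    by_cases h : ω 0 = true
    · simp [Set.indicator, hVdef, h]
    · simp [Set.indicator, hVdef, h]
  have hf₁int : Integrable (fun ω : Om => if ω (-(tauk ω k : ℤ)) = true then (1 : ℝ) else 0) μ := by
    rw [hf₁eq]
    exact (integrable_const (1 : ℝ)).indicator hUmeas
  have hf₂int : Integrable (fun ω : Om => if ω 0 = true then (1 : ℝ) else 0) μ := by
    rw [hf₂eq]
    exact (integrable_const (1 : ℝ)).indicator hVmeas
  refine ae_eq_condExp_of_forall_setIntegral_eq hm hf₂int
    (fun s _ _ => integrable_condExp.integrableOn) (fun s hs hμs => ?_)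
    (stronglyMeasurable_condExp.aestronglyMeasurable)
  rw [setIntegral_condExp hm hf₁int hs]
  obtain ⟨S, hSmeas, rfl⟩ := hs
  rw [hf₁eq, hf₂eq, setIntegral_indicator hUmeas, setIntegral_indicator hVmeas,
    setIntegral_const, setIntegral_const]
  rw [measureReal_def, measureReal_def, measure_eq hstat k hk hSmeas]

end
end

section
/- Let {M_n} be a stationary ergodic first-order Markov chain with countable state space S, let s ∈ S with P(M_1 = s) > 0, and set X_n = 1_{{M_n = s}}. Then the binary process {X_n} is stationary, ergodic, and finitarily Markovian: almost surely there exists a finite K such that for all i ≥ 1, y ∈ {0,1}, and z_{-K-i+1}^{-K}, one has P(X_1 = y | X_{-K+1}^0) = P(X_1 = y | z_{-K-i+1}^{-K}, X_{-K+1}^0) whenever the conditioning event has positive probability. -/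
open MeasureTheory Filter

noncomputable section

/-- The left shift on two-sided sequences. -/
def shiftA {A : Type} : (ℤ → A) → (ℤ → A) := fun ω n => ω (n + 1)

section Words

variable {A : Type} [DecidableEq A] [Inhabited A] [MeasurableSpace A]

/-- The word `w` occurs in `ω` ending at position `t`, i.e. `X_{t-|w|+1}^t = w`. -/
def occursAt (ω : ℤ → A) (t : ℤ) (w : List A) : Prop :=
  ∀ i ∈ Finset.range w.length, ω (t - (i : ℤ)) = w.reverse.getD i default

/-- The probability `p(w)` of observing the word `w` as `X_{-|w|+1}^0`. -/
noncomputable def wordProb (μ : MeasureTheory.Measure (ℤ → A)) (w : List A) : ℝ :=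
  (μ {ω | occursAt ω 0 w}).toReal

/-- The conditional probability `p(y | w) = p(wy)/p(w)`. -/
noncomputable def condProb (μ : MeasureTheory.Measure (ℤ → A)) (y : A) (w : List A) : ℝ :=
  wordProb μ (w ++ [y]) / wordProb μ w

/-- `w` is a memory word: extending the conditioning word `w` into the past does not
change the conditional distribution of the next symbol. -/
def IsMemoryWord (μ : MeasureTheory.Measure (ℤ → A)) (w : List A) : Prop :=
  ∀ (z : List A) (y : A), z ≠ [] → 0 < wordProb μ (z ++ w ++ [y]) →
    condProb μ y w = condProb μ y (z ++ w)

/-- The word `X_{t-k+1}^t` observed in `ω`. -/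
def pastWord (ω : ℤ → A) (t : ℤ) (k : ℕ) : List A :=
  ((List.range k).map (fun i => ω (t - (i : ℤ)))).reverse

/-- The memory length `K(X_{-∞}^t)`: the smallest `k` such that `X_{t-k+1}^t` is a
memory word. -/
noncomputable def memLenAt (μ : MeasureTheory.Measure (ℤ → A)) (ω : ℤ → A) (t : ℤ) : ℕ :=
  sInf {k : ℕ | IsMemoryWord μ (pastWord ω t k)}

/-- The number of occurrences of the word `w` ending at a position `t ∈ [a, b]`. -/
noncomputable def countOcc (ω : ℤ → A) (a b : ℤ) (w : List A) : ℕ :=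
  letI : DecidablePred (fun t : ℤ => occursAt ω t w) := fun _ => Classical.dec _
  ((Finset.Icc a b).filter (fun t => occursAt ω t w)).card

end Words

set_option linter.unusedSectionVars false
set_option linter.unusedVariables false

namespace Stmt5Aux

variable {S : Type} [Countable S] [DecidableEq S] [Inhabited S]
    [MeasurableSpace S] [MeasurableSingletonClass S]

def tauM (m : ℕ) : (ℤ → S) → (ℤ → S) := fun ω n => ω (n - m)
def sigM (m : ℕ) : (ℤ → S) → (ℤ → S) := fun ω n => ω (n + m)
def piT (t : ℤ) : (ℤ → S) → (ℕ → S) := fun ω i => ω (t - i)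
def Fpast (t : ℤ) : MeasurableSpace (ℤ → S) := MeasurableSpace.comap (piT t) inferInstance

lemma measurable_tauM (m : ℕ) : Measurable (tauM (S := S) m) :=
  measurable_pi_lambda _ fun n => measurable_pi_apply _

lemma measurable_sigM (m : ℕ) : Measurable (sigM (S := S) m) :=
  measurable_pi_lambda _ fun n => measurable_pi_apply _

lemma measurable_piT (t : ℤ) : Measurable (piT (S := S) t) :=
  measurable_pi_lambda _ fun n => measurable_pi_apply _

lemma Fpast_le (t : ℤ) : Fpast (S := S) t ≤ (by infer_instance) :=
  (measurable_piT t).comap_le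

lemma sig_tau (m : ℕ) : sigM (S := S) m ∘ tauM m = id := by
  funext ω n; simp [sigM, tauM]

lemma tau_sig (m : ℕ) : tauM (S := S) m ∘ sigM m = id := by
  funext ω n; simp [sigM, tauM]

lemma piT_comp (t : ℤ) (m : ℕ) : piT (S := S) (t - m) = piT t ∘ tauM m := by
  funext ω i; simp [piT, tauM]; ring_nf

lemma Fpast_comap (t : ℤ) (m : ℕ) :
    Fpast (S := S) (t - m) = MeasurableSpace.comap (tauM m) (Fpast t) := by
  rw [Fpast, piT_comp t m, ← MeasurableSpace.comap_comp]; rfl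

lemma Fpast_sub_one_le (t : ℤ) : Fpast (S := S) (t - 1) ≤ Fpast t := by
  have hcomp : piT (S := S) (t - 1) = (fun f : ℕ → S => fun i => f (i + 1)) ∘ piT t := by
    funext ω i; simp [piT]; ring_nf
  rw [Fpast, hcomp, ← MeasurableSpace.comap_comp]
  refine le_trans (MeasurableSpace.comap_mono ?_) le_rfl
  exact (measurable_pi_lambda _ fun i => measurable_pi_apply _).comap_le

lemma Fpast_succ_le (k : ℕ) : Fpast (S := S) (-((k:ℕ) + 1 : ℕ)) ≤ Fpast (-(k : ℕ)) := by
  have h : (-((k:ℕ) + 1 : ℕ) : ℤ) = ((-(k : ℕ) : ℤ) - 1) := by push_cast; ring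
  rw [h]; exact Fpast_sub_one_le _

-- measurable set membership in Fpast
lemma measurableSet_Fpast_iff {t : ℤ} {A : Set (ℤ → S)} :
    MeasurableSet[Fpast t] A ↔
      ∃ A' : Set (ℕ → S), MeasurableSet A' ∧ piT t ⁻¹' A' = A := by
  rw [Fpast]; exact MeasurableSpace.measurableSet_comap

lemma atom_mem_Fpast (t : ℤ) (u : S) :
    MeasurableSet[Fpast t] {ω : ℤ → S | ω t = u} := by
  rw [measurableSet_Fpast_iff]
  refine ⟨{f : ℕ → S | f 0 = u}, ?_, ?_⟩
  · have : {f : ℕ → S | f 0 = u} = (fun f : ℕ → S => f 0) ⁻¹' {u} := by ext f; simp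
    rw [this]; exact (measurable_pi_apply 0) (measurableSet_singleton u)
  · ext ω; simp [piT]


variable (μ : Measure (ℤ → S)) [IsProbabilityMeasure μ]

lemma tauM_measurePreserving (hstat : MeasurePreserving (shiftA (A := S)) μ μ) (m : ℕ) :
    MeasurePreserving (tauM m) μ μ := by
  induction m with
  | zero =>
      have : tauM (S := S) 0 = id := by funext ω n; simp [tauM]
      rw [this]; exact MeasurePreserving.id μ
  | succ k ih =>
      have h1 : MeasurePreserving (tauM (S := S) 1) μ μ := by
        refine ⟨measurable_tauM 1, ?_⟩
        conv_lhs => rw [← hstat.map_eq]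
        rw [Measure.map_map (measurable_tauM 1) hstat.measurable]
        have : tauM (S := S) 1 ∘ shiftA = id := by
          funext ω n; simp [tauM, shiftA]
        rw [this, Measure.map_id]
      have hc : tauM (S := S) (k + 1) = tauM 1 ∘ tauM k := by
        funext ω n; simp [tauM]; ring_nf
      rw [hc]; exact h1.comp ih


lemma core0
    (hMarkov : ∀ s : S,
      μ[(fun ω => if ω 1 = s then (1 : ℝ) else 0) |
          MeasurableSpace.comap (fun ω : ℤ → S => fun i : ℕ => ω (-(i : ℤ))) inferInstance]
        =ᵐ[μ]
      μ[(fun ω => if ω 1 = s then (1 : ℝ) else 0) |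
          MeasurableSpace.comap (fun ω : ℤ → S => ω 0) inferInstance])
    (s u : S) {B : Set (ℤ → S)} (hB : MeasurableSet[Fpast (0:ℤ)] B)
    (hBu : B ⊆ {ω | ω 0 = u}) :
    μ ({ω | ω 1 = s} ∩ B) * μ {ω : ℤ → S | ω 0 = u}
      = μ ({ω | ω 1 = s} ∩ {ω : ℤ → S | ω 0 = u}) * μ B := by
  have hF0 : Fpast (S := S) (0:ℤ)
      = MeasurableSpace.comap (fun ω : ℤ → S => fun i : ℕ => ω (-(i : ℤ))) inferInstance := by
    rw [Fpast]
    congr 1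
    funext ω i
    simp [piT]
  have hm : MeasurableSpace.comap (fun ω : ℤ → S => fun i : ℕ => ω (-(i : ℤ)))
      inferInstance ≤ (by infer_instance : MeasurableSpace (ℤ → S)) := by
    rw [← hF0]; exact Fpast_le 0
  have hT : MeasurableSet {ω : ℤ → S | ω 1 = s} := by
    have : {ω : ℤ → S | ω 1 = s} = (fun ω : ℤ → S => ω 1) ⁻¹' {s} := rfl
    rw [this]; exact (measurable_pi_apply 1) (measurableSet_singleton s)
  have hfind : (fun ω : ℤ → S => if ω 1 = s then (1 : ℝ) else 0)
      = Set.indicator {ω : ℤ → S | ω 1 = s} (fun _ => (1:ℝ)) := by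
    funext ω; by_cases h : ω 1 = s <;> simp [Set.indicator, h]
  have hfint : Integrable (fun ω : ℤ → S => if ω 1 = s then (1 : ℝ) else 0) μ := by
    rw [hfind]; exact (integrable_const 1).indicator hT
  have hgm : Measurable[MeasurableSpace.comap (fun ω : ℤ → S => ω 0) inferInstance]
      (μ[(fun ω => if ω 1 = s then (1 : ℝ) else 0) |
        MeasurableSpace.comap (fun ω : ℤ → S => ω 0) inferInstance]) :=
    stronglyMeasurable_condExp.measurable
  set g := (μ[(fun ω => if ω 1 = s then (1 : ℝ) else 0) |
        MeasurableSpace.comap (fun ω : ℤ → S => ω 0) inferInstance]) with hg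
  have hconst : ∀ ω ω' : ℤ → S, ω 0 = ω' 0 → g ω = g ω' := by
    intro ω ω' h00
    by_contra hne
    have hs1 := hgm (measurableSet_singleton (g ω))
    rw [MeasurableSpace.measurableSet_comap] at hs1
    obtain ⟨t, ht, hpre⟩ := hs1
    have hω : ω ∈ g ⁻¹' {g ω} := rfl
    rw [← hpre] at hω
    have hω' : ω' ∈ (fun ω : ℤ → S => ω 0) ⁻¹' t := by
      have h0t : ω 0 ∈ t := hω
      show ω' 0 ∈ t
      rwa [← h00]
    rw [hpre] at hω'
    exact hne (hω'.symm)
  have key : ∀ B' : Set (ℤ → S), MeasurableSet[Fpast (0:ℤ)] B' → B' ⊆ {ω | ω 0 = u} →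
      (μ ({ω | ω 1 = s} ∩ B')).toReal = g (fun _ => u) * (μ B').toReal := by
    intro B' hB' hB'u
    have hB'm : MeasurableSet B' := Fpast_le 0 _ hB'
    have hB'' : MeasurableSet[MeasurableSpace.comap
        (fun ω : ℤ → S => fun i : ℕ => ω (-(i : ℤ))) inferInstance] B' := hF0 ▸ hB'
    have h1 : ∫ x in B', (if x 1 = s then (1:ℝ) else 0) ∂μ
        = (μ ({ω | ω 1 = s} ∩ B')).toReal := by
      have := setIntegral_indicator (μ := μ) (s := B')
        (f := fun _ : ℤ → S => (1:ℝ)) hT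
      rw [show (fun x : ℤ → S => if x 1 = s then (1:ℝ) else 0)
          = Set.indicator {ω : ℤ → S | ω 1 = s} (fun _ => (1:ℝ)) from hfind] at *
      rw [this, setIntegral_const]
      simp [Set.inter_comm]; rfl
    have h2 : ∫ x in B', (μ[(fun ω => if ω 1 = s then (1 : ℝ) else 0) |
        MeasurableSpace.comap (fun ω : ℤ → S => fun i : ℕ => ω (-(i : ℤ))) inferInstance]) x ∂μ
        = ∫ x in B', (if x 1 = s then (1:ℝ) else 0) ∂μ :=
      setIntegral_condExp hm hfint hB''
    have h3 : ∫ x in B', (μ[(fun ω => if ω 1 = s then (1 : ℝ) else 0) |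
        MeasurableSpace.comap (fun ω : ℤ → S => fun i : ℕ => ω (-(i : ℤ))) inferInstance]) x ∂μ
        = ∫ x in B', g x ∂μ :=
      integral_congr_ae (ae_restrict_of_ae (hMarkov s))
    have h4 : ∫ x in B', g x ∂μ = (μ B').toReal * g (fun _ => u) := by
      rw [setIntegral_congr_fun (g := fun _ => g (fun _ => u)) hB'm
        (fun x hx => hconst x (fun _ => u) (hB'u hx)), setIntegral_const, smul_eq_mul]; rfl
    rw [← h1, ← h2, h3, h4]; ring
  have e1 := key B hB hBu
  have e2 := key {ω | ω 0 = u} (atom_mem_Fpast 0 u) (subset_refl _)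
  have hfin : ∀ X Y : Set (ℤ → S), μ X * μ Y ≠ ⊤ :=
    fun X Y => ENNReal.mul_ne_top (measure_ne_top μ X) (measure_ne_top μ Y)
  refine (ENNReal.toReal_eq_toReal_iff' (hfin _ _) (hfin _ _)).mp ?_
  rw [ENNReal.toReal_mul, ENNReal.toReal_mul, e1, e2]
  ring


lemma measurableSet_atom (t : ℤ) (u : S) : MeasurableSet {ω : ℤ → S | ω t = u} := by
  have : {ω : ℤ → S | ω t = u} = (fun ω : ℤ → S => ω t) ⁻¹' {u} := rfl
  rw [this]; exact (measurable_pi_apply t) (measurableSet_singleton u)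

lemma measure_partition (t : ℤ) {V : Set (ℤ → S)} (hV : MeasurableSet V) :
    μ V = ∑' u : S, μ (V ∩ {ω | ω t = u}) := by
  have hdec : V = ⋃ u : S, V ∩ {ω : ℤ → S | ω t = u} := by
    ext ω; simp
  conv_lhs => rw [hdec]
  rw [measure_iUnion ?_ (fun u => hV.inter (measurableSet_atom t u))]
  intro u u' huu'
  simp only [Function.onFun, Set.disjoint_left]
  rintro ω ⟨-, h1⟩ ⟨-, h2⟩
  exact huu' (h1.symm.trans h2)

lemma core (hstat : MeasurePreserving (shiftA (A := S)) μ μ)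
    (hMarkov : ∀ s : S,
      μ[(fun ω => if ω 1 = s then (1 : ℝ) else 0) |
          MeasurableSpace.comap (fun ω : ℤ → S => fun i : ℕ => ω (-(i : ℤ))) inferInstance]
        =ᵐ[μ]
      μ[(fun ω => if ω 1 = s then (1 : ℝ) else 0) |
          MeasurableSpace.comap (fun ω : ℤ → S => ω 0) inferInstance])
    (m : ℕ) (s u : S) {B : Set (ℤ → S)} (hB : MeasurableSet[Fpast (-(m:ℤ))] B)
    (hBu : B ⊆ {ω | ω (-(m:ℤ)) = u}) :
    μ ({ω | ω (1 - (m:ℤ)) = s} ∩ B) * μ {ω : ℤ → S | ω (-(m:ℤ)) = u}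
      = μ ({ω | ω (1 - (m:ℤ)) = s} ∩ {ω : ℤ → S | ω (-(m:ℤ)) = u}) * μ B := by
  have hmm : (-(m:ℤ)) = (0:ℤ) - (m:ℕ) := by push_cast; ring
  have hcom : Fpast (S := S) (-(m:ℤ)) = MeasurableSpace.comap (tauM m) (Fpast 0) := by
    rw [hmm]; exact Fpast_comap 0 m
  rw [hcom, MeasurableSpace.measurableSet_comap] at hB
  obtain ⟨B', hB', hpre⟩ := hB
  -- identify preimages
  have hTpre : tauM (S := S) m ⁻¹' {ω | ω 1 = s} = {ω | ω (1 - (m:ℤ)) = s} := by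
    ext ω; simp [tauM]
  have hApre : tauM (S := S) m ⁻¹' {ω | ω 0 = u} = {ω | ω (-(m:ℤ)) = u} := by
    ext ω; simp [tauM]
  have hB'sub : B' ⊆ {ω : ℤ → S | ω 0 = u} := by
    intro x hx
    have hx2 : sigM m x ∈ B := by
      rw [← hpre]
      show tauM m (sigM m x) ∈ B'
      have : tauM (S := S) m (sigM m x) = x := by
        funext n; simp [tauM, sigM]
      rwa [this]
    have h4 := hBu hx2
    simp only [Set.mem_setOf_eq] at h4
    show x 0 = u
    have h3 : sigM (S := S) m x (-(m:ℤ)) = x 0 := by simp [sigM]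
    rwa [h3] at h4
  have hmp := tauM_measurePreserving μ hstat m
  have hmeasB' : MeasurableSet B' := Fpast_le 0 _ hB'
  have e1 : μ ({ω | ω (1 - (m:ℤ)) = s} ∩ B) = μ ({ω | ω 1 = s} ∩ B') := by
    rw [← hpre, ← hTpre, ← Set.preimage_inter]
    exact hmp.measure_preimage ((measurableSet_atom 1 s).inter hmeasB').nullMeasurableSet
  have e2 : μ {ω : ℤ → S | ω (-(m:ℤ)) = u} = μ {ω : ℤ → S | ω 0 = u} := by
    rw [← hApre]
    exact hmp.measure_preimage (measurableSet_atom 0 u).nullMeasurableSet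
  have e3 : μ ({ω | ω (1 - (m:ℤ)) = s} ∩ {ω : ℤ → S | ω (-(m:ℤ)) = u})
      = μ ({ω | ω 1 = s} ∩ {ω : ℤ → S | ω 0 = u}) := by
    rw [← hTpre, ← hApre, ← Set.preimage_inter]
    exact hmp.measure_preimage
      ((measurableSet_atom 1 s).inter (measurableSet_atom 0 u)).nullMeasurableSet
  have e4 : μ B = μ B' := by
    rw [← hpre]; exact hmp.measure_preimage hmeasB'.nullMeasurableSet
  rw [e1, e2, e3, e4]
  exact core0 μ hMarkov s u hB' hB'sub


open scoped ENNReal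

lemma core_div (hstat : MeasurePreserving (shiftA (A := S)) μ μ)
    (hMarkov : ∀ s : S,
      μ[(fun ω => if ω 1 = s then (1 : ℝ) else 0) |
          MeasurableSpace.comap (fun ω : ℤ → S => fun i : ℕ => ω (-(i : ℤ))) inferInstance]
        =ᵐ[μ]
      μ[(fun ω => if ω 1 = s then (1 : ℝ) else 0) |
          MeasurableSpace.comap (fun ω : ℤ → S => ω 0) inferInstance])
    (m : ℕ) (s u : S) {B : Set (ℤ → S)} (hB : MeasurableSet[Fpast (-(m:ℤ))] B)
    (hBu : B ⊆ {ω | ω (-(m:ℤ)) = u}) :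
    μ ({ω | ω (1 - (m:ℤ)) = s} ∩ B)
      = μ ({ω | ω (1 - (m:ℤ)) = s} ∩ {ω : ℤ → S | ω (-(m:ℤ)) = u})
        / μ {ω : ℤ → S | ω (-(m:ℤ)) = u} * μ B := by
  by_cases h0 : μ {ω : ℤ → S | ω (-(m:ℤ)) = u} = 0
  · have hB0 : μ B = 0 := le_antisymm (le_trans (measure_mono hBu) h0.le) (zero_le)
    have hL : μ ({ω | ω (1 - (m:ℤ)) = s} ∩ B) = 0 :=
      le_antisymm (le_trans (measure_mono Set.inter_subset_right) hB0.le) (zero_le)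
    rw [hL, hB0, mul_zero]
  · have hcore := core μ hstat hMarkov m s u hB hBu
    have ha : μ {ω : ℤ → S | ω (-(m:ℤ)) = u} ≠ ⊤ := measure_ne_top μ _
    have hb : μ ({ω | ω (1 - (m:ℤ)) = s} ∩ B)
        = μ ({ω | ω (1 - (m:ℤ)) = s} ∩ {ω : ℤ → S | ω (-(m:ℤ)) = u}) * μ B
          / μ {ω : ℤ → S | ω (-(m:ℤ)) = u} := by
      rw [ENNReal.eq_div_iff h0 ha, mul_comm]
      exact hcore
    rw [hb, div_eq_mul_inv, div_eq_mul_inv, mul_right_comm]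

lemma ind (hstat : MeasurePreserving (shiftA (A := S)) μ μ)
    (hMarkov : ∀ s : S,
      μ[(fun ω => if ω 1 = s then (1 : ℝ) else 0) |
          MeasurableSpace.comap (fun ω : ℤ → S => fun i : ℕ => ω (-(i : ℤ))) inferInstance]
        =ᵐ[μ]
      μ[(fun ω => if ω 1 = s then (1 : ℝ) else 0) |
          MeasurableSpace.comap (fun ω : ℤ → S => ω 0) inferInstance])
    (s₀ : S) (b : ℕ → Bool) (T : Set (ℤ → S))
    (H0 : ∃ h₀ : S → ℝ≥0∞, ∀ A : Set (ℤ → S), MeasurableSet[Fpast (0:ℤ)] A →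
      μ (T ∩ A) = ∑' u : S, h₀ u * μ (A ∩ {ω | ω 0 = u})) :
    ∀ k : ℕ, ∃ h : S → ℝ≥0∞, ∀ A : Set (ℤ → S), MeasurableSet[Fpast (-(k:ℤ))] A →
      μ (T ∩ {ω | ∀ i < k, decide (ω (-(i:ℤ)) = s₀) = b i} ∩ A)
        = ∑' u : S, h u * μ (A ∩ {ω | ω (-(k:ℤ)) = u}) := by
  intro k
  induction k with
  | zero =>
      obtain ⟨h₀, H⟩ := H0
      refine ⟨h₀, fun A hA => ?_⟩
      have h1 : {ω : ℤ → S | ∀ i < (0:ℕ), decide (ω (-(i:ℤ)) = s₀) = b i} = Set.univ := by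
        ext ω; simp
      simp only [Nat.cast_zero, neg_zero] at hA ⊢
      rw [h1, Set.inter_univ]
      exact H A hA
  | succ k ih =>
      obtain ⟨h, hh⟩ := ih
      refine ⟨fun u => ∑' s : S, (if decide (s = s₀) = b k then h s else 0) *
        (μ ({ω | ω (-(k:ℤ)) = s} ∩ {ω | ω (-((k+1:ℕ):ℤ)) = u})
          / μ {ω : ℤ → S | ω (-((k+1:ℕ):ℤ)) = u}), fun A hA => ?_⟩
      have hAmeas : MeasurableSet A := Fpast_le _ _ hA
      have hAk : MeasurableSet[Fpast (-(k:ℤ))] A := Fpast_succ_le k A hA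
      have hD : MeasurableSet[Fpast (-(k:ℤ))]
          {ω : ℤ → S | decide (ω (-(k:ℤ)) = s₀) = b k} := by
        rw [measurableSet_Fpast_iff]
        refine ⟨{f : ℕ → S | decide (f 0 = s₀) = b k}, ?_, ?_⟩
        · cases hbk : b k
          · have he : {f : ℕ → S | decide (f 0 = s₀) = false}
                = ((fun f : ℕ → S => f 0) ⁻¹' {s₀})ᶜ := by ext f; simp
            rw [he]
            exact ((measurable_pi_apply 0) (measurableSet_singleton s₀)).compl
          · have he : {f : ℕ → S | decide (f 0 = s₀) = true}
                = ((fun f : ℕ → S => f 0) ⁻¹' {s₀}) := by ext f; simp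
            rw [he]
            exact ((measurable_pi_apply 0) (measurableSet_singleton s₀))
        · ext ω; simp [piT]
      have hsplit : T ∩ {ω | ∀ i < k + 1, decide (ω (-(i:ℤ)) = s₀) = b i} ∩ A
          = T ∩ {ω | ∀ i < k, decide (ω (-(i:ℤ)) = s₀) = b i}
            ∩ ({ω | decide (ω (-(k:ℤ)) = s₀) = b k} ∩ A) := by
        ext ω
        simp only [Set.mem_inter_iff, Set.mem_setOf_eq]
        constructor
        · rintro ⟨⟨h1, h2⟩, h3⟩
          exact ⟨⟨h1, fun i hi => h2 i (by omega)⟩, ⟨h2 k (by omega), h3⟩⟩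
        · rintro ⟨⟨h1, h2⟩, h4, h3⟩
          refine ⟨⟨h1, fun i hi => ?_⟩, h3⟩
          rcases Nat.lt_succ_iff_lt_or_eq.mp hi with hlt | heq
          · exact h2 i hlt
          · rw [heq]; exact h4
      rw [hsplit, hh _ (hD.inter hAk)]
      have hterm : ∀ s : S,
          h s * μ (({ω | decide (ω (-(k:ℤ)) = s₀) = b k} ∩ A) ∩ {ω | ω (-(k:ℤ)) = s})
          = (if decide (s = s₀) = b k then h s else 0) * μ (A ∩ {ω | ω (-(k:ℤ)) = s}) := by
        intro s
        by_cases hcase : decide (s = s₀) = b k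
        · rw [if_pos hcase]
          congr 2
          ext ω
          simp only [Set.mem_inter_iff, Set.mem_setOf_eq]
          constructor
          · rintro ⟨⟨-, h2⟩, h3⟩; exact ⟨h2, h3⟩
          · rintro ⟨h2, h3⟩
            exact ⟨⟨by rw [h3]; exact hcase, h2⟩, h3⟩
        · rw [if_neg hcase, zero_mul]
          have he : (({ω : ℤ → S | decide (ω (-(k:ℤ)) = s₀) = b k} ∩ A)
              ∩ {ω | ω (-(k:ℤ)) = s}) = ∅ := by
            ext ω
            simp only [Set.mem_inter_iff, Set.mem_setOf_eq, Set.mem_empty_iff_false,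
              iff_false, not_and]
            rintro ⟨hd, -⟩ hat
            exact hcase (by rw [← hat]; exact hd)
          rw [he, measure_empty, mul_zero]
      have hatom : ∀ s : S, μ (A ∩ {ω | ω (-(k:ℤ)) = s})
          = ∑' u : S, (μ ({ω | ω (-(k:ℤ)) = s} ∩ {ω | ω (-((k+1:ℕ):ℤ)) = u})
              / μ {ω : ℤ → S | ω (-((k+1:ℕ):ℤ)) = u})
            * μ (A ∩ {ω | ω (-((k+1:ℕ):ℤ)) = u}) := by
        intro s
        rw [measure_partition μ (-((k+1:ℕ):ℤ)) (hAmeas.inter (measurableSet_atom _ s))]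
        refine tsum_congr fun u => ?_
        have hre : (A ∩ {ω | ω (-(k:ℤ)) = s}) ∩ {ω : ℤ → S | ω (-((k+1:ℕ):ℤ)) = u}
            = {ω | ω (-(k:ℤ)) = s} ∩ (A ∩ {ω : ℤ → S | ω (-((k+1:ℕ):ℤ)) = u}) := by
          ext ω
          simp only [Set.mem_inter_iff, Set.mem_setOf_eq]
          tauto
        rw [hre]
        have hBmem : MeasurableSet[Fpast (-((k+1:ℕ):ℤ))]
            (A ∩ {ω : ℤ → S | ω (-((k+1:ℕ):ℤ)) = u}) :=
          hA.inter (atom_mem_Fpast _ u)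
        have hBsub : A ∩ {ω : ℤ → S | ω (-((k+1:ℕ):ℤ)) = u}
            ⊆ {ω : ℤ → S | ω (-((k+1:ℕ):ℤ)) = u} := Set.inter_subset_right
        have hcore := core_div μ hstat hMarkov (k+1) s u hBmem hBsub
        have hcast : (1 - ((k+1:ℕ):ℤ)) = -(k:ℤ) := by push_cast; ring
        rw [hcast] at hcore
        exact hcore
      calc ∑' s : S, h s * μ (({ω | decide (ω (-(k:ℤ)) = s₀) = b k} ∩ A)
              ∩ {ω | ω (-(k:ℤ)) = s})
          = ∑' s : S, (if decide (s = s₀) = b k then h s else 0)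
              * μ (A ∩ {ω | ω (-(k:ℤ)) = s}) := tsum_congr hterm
        _ = ∑' s : S, (if decide (s = s₀) = b k then h s else 0)
              * ∑' u : S, (μ ({ω | ω (-(k:ℤ)) = s} ∩ {ω | ω (-((k+1:ℕ):ℤ)) = u})
                  / μ {ω : ℤ → S | ω (-((k+1:ℕ):ℤ)) = u})
                * μ (A ∩ {ω | ω (-((k+1:ℕ):ℤ)) = u}) := by
            exact tsum_congr fun s => by rw [hatom s]
        _ = ∑' s : S, ∑' u : S, (if decide (s = s₀) = b k then h s else 0)
              * ((μ ({ω | ω (-(k:ℤ)) = s} ∩ {ω | ω (-((k+1:ℕ):ℤ)) = u})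
                  / μ {ω : ℤ → S | ω (-((k+1:ℕ):ℤ)) = u})
                * μ (A ∩ {ω | ω (-((k+1:ℕ):ℤ)) = u})) :=
            tsum_congr fun s => (ENNReal.tsum_mul_left).symm
        _ = ∑' u : S, ∑' s : S, (if decide (s = s₀) = b k then h s else 0)
              * ((μ ({ω | ω (-(k:ℤ)) = s} ∩ {ω | ω (-((k+1:ℕ):ℤ)) = u})
                  / μ {ω : ℤ → S | ω (-((k+1:ℕ):ℤ)) = u})
                * μ (A ∩ {ω | ω (-((k+1:ℕ):ℤ)) = u})) := ENNReal.tsum_comm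
        _ = ∑' u : S, (∑' s : S, (if decide (s = s₀) = b k then h s else 0)
              * (μ ({ω | ω (-(k:ℤ)) = s} ∩ {ω | ω (-((k+1:ℕ):ℤ)) = u})
                  / μ {ω : ℤ → S | ω (-((k+1:ℕ):ℤ)) = u}))
                * μ (A ∩ {ω | ω (-((k+1:ℕ):ℤ)) = u}) := by
            refine tsum_congr fun u => ?_
            rw [← ENNReal.tsum_mul_right]
            exact tsum_congr fun s => (mul_assoc _ _ _).symm


lemma recurrence (hstat : MeasurePreserving (shiftA (A := S)) μ μ)
    (herg : Ergodic (shiftA (A := S)) μ) (s₀ : S) (hpos : 0 < μ {ω : ℤ → S | ω 1 = s₀}) :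
    μ {ω : ℤ → S | ∀ j : ℕ, ω (-(j:ℤ)) ≠ s₀} = 0 := by
  set Bn : ℕ → Set (ℤ → S) := fun m => {ω | ∀ t : ℤ, t ≤ (m:ℤ) → ω t ≠ s₀} with hBn
  have hBmeas : ∀ m, MeasurableSet (Bn m) := by
    intro m
    have he : Bn m = ⋂ (t : ℤ), ⋂ (_ : t ≤ (m:ℤ)), {ω : ℤ → S | ω t = s₀}ᶜ := by
      ext ω; simp [hBn]
    rw [he]
    exact MeasurableSet.iInter fun t =>
      MeasurableSet.iInter fun _ => (measurableSet_atom t s₀).compl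
  have hpre : ∀ m, shiftA ⁻¹' Bn m = Bn (m + 1) := by
    intro m
    ext ω
    simp only [Set.mem_preimage, hBn, Set.mem_setOf_eq]
    constructor
    · intro h t ht
      have h2 := h (t - 1) (by push_cast at ht ⊢; omega)
      have h3 : shiftA ω (t - 1) = ω t := by
        show ω (t - 1 + 1) = ω t
        congr 1; ring
      rwa [h3] at h2
    · intro h t ht
      show ω (t + 1) ≠ s₀
      exact h (t + 1) (by push_cast; omega)
  have hmeq : ∀ m, μ (Bn m) = μ (Bn 0) := by
    intro m
    induction m with
    | zero => rfl
    | succ j ih =>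
        rw [← hpre j] at *
        rw [hstat.measure_preimage (hBmeas j).nullMeasurableSet]
        exact ih
  have hanti : Antitone Bn := by
    intro m m' hmm'
    intro ω hω t ht
    exact hω t (le_trans ht (by exact_mod_cast Int.ofNat_le.mpr hmm'))
  have hCinv : shiftA ⁻¹' (⋂ m : ℕ, Bn m) = ⋂ m : ℕ, Bn m := by
    rw [Set.preimage_iInter]
    have h1 : ∀ m, shiftA ⁻¹' Bn m = Bn (m+1) := hpre
    ext ω
    simp only [Set.mem_iInter]
    constructor
    · intro h m
      have := h m
      rw [h1 m] at this
      exact hanti (Nat.le_succ m) this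
    · intro h m
      rw [h1 m]
      exact h (m + 1)
  have hCmeas : MeasurableSet (⋂ m : ℕ, Bn m) := MeasurableSet.iInter hBmeas
  rcases herg.ae_empty_or_univ hCmeas hCinv with hC | hC
  · -- μ C = 0
    have hC0 : μ (⋂ m : ℕ, Bn m) = 0 := ae_eq_empty.mp hC
    have hiInf : μ (⋂ m : ℕ, Bn m) = ⨅ m : ℕ, μ (Bn m) :=
      hanti.measure_iInter (fun m => (hBmeas m).nullMeasurableSet)
        ⟨0, measure_ne_top μ _⟩
    have hB0 : μ (Bn 0) = 0 := by
      have : (⨅ m : ℕ, μ (Bn m)) = μ (Bn 0) := by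
        rw [show (fun m : ℕ => μ (Bn m)) = fun _ => μ (Bn 0) from funext hmeq]
        exact iInf_const
      rw [← this, ← hiInf]
      exact hC0
    have hset : {ω : ℤ → S | ∀ j : ℕ, ω (-(j:ℤ)) ≠ s₀} = Bn 0 := by
      ext ω
      simp only [hBn, Set.mem_setOf_eq]
      constructor
      · intro h t ht
        have h2 := h (-t).toNat
        rwa [show -(((-t).toNat:ℕ):ℤ) = t by push_cast at ht ⊢; omega] at h2
      · intro h j
        exact h (-(j:ℤ)) (by push_cast; omega)
    rw [hset]
    exact hB0
  · -- C conull: contradiction with hpos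
    exfalso
    have hCc : μ ((⋂ m : ℕ, Bn m)ᶜ) = 0 := ae_eq_univ.mp hC
    have hsub : {ω : ℤ → S | ω 1 = s₀} ⊆ (⋂ m : ℕ, Bn m)ᶜ := by
      intro ω hω hmem
      have h1 : ω ∈ Bn 1 := Set.mem_iInter.mp hmem 1
      exact h1 1 (by norm_num) hω
    have := measure_mono (μ := μ) hsub
    rw [hCc] at this
    exact absurd (le_antisymm this (zero_le)) (ne_of_gt hpos)


lemma measurableSet_decide {α : Type*} [MeasurableSpace α] (g : α → S) (hg : Measurable g)
    (s₀ : S) (c : Bool) : MeasurableSet {a | decide (g a = s₀) = c} := by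
  cases c
  · have he : {a | decide (g a = s₀) = false} = (g ⁻¹' {s₀})ᶜ := by ext a; simp
    rw [he]; exact (hg (measurableSet_singleton s₀)).compl
  · have he : {a | decide (g a = s₀) = true} = g ⁻¹' {s₀} := by ext a; simp
    rw [he]; exact hg (measurableSet_singleton s₀)

lemma measurable_decide_fun (s₀ : S) : Measurable (fun x : S => decide (x = s₀)) := by
  refine measurable_to_countable' fun c => ?_
  have he : (fun x : S => decide (x = s₀)) ⁻¹' {c} = {a : S | decide (a = s₀) = c} := by
    ext a; simp
  rw [he]
  exact measurableSet_decide id measurable_id s₀ c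

lemma measurable_phi (s₀ : S) : Measurable (fun (ω : ℤ → S) (n : ℤ) => decide (ω n = s₀)) :=
  measurable_pi_lambda _ fun n =>
    (measurable_decide_fun s₀).comp (measurable_pi_apply n)


lemma measurableSet_coord {A : Type} [MeasurableSpace A] [MeasurableSingletonClass A]
    (t : ℤ) (c : A) : MeasurableSet {x : ℤ → A | x t = c} := by
  have he : {x : ℤ → A | x t = c} = (fun x : ℤ → A => x t) ⁻¹' {c} := rfl
  rw [he]; exact (measurable_pi_apply t) (measurableSet_singleton c)

lemma measurableSet_occursAt (v : List Bool) (t : ℤ) :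
    MeasurableSet {x : ℤ → Bool | occursAt x t v} := by
  have he : {x : ℤ → Bool | occursAt x t v}
      = ⋂ i ∈ Finset.range v.length,
          {x : ℤ → Bool | x (t - (i:ℤ)) = v.reverse.getD i default} := by
    ext x; simp [occursAt]
  rw [he]
  exact MeasurableSet.biInter (Finset.range v.length).countable_toSet
    (fun i _ => measurableSet_coord _ _)

lemma shift_preimage_occursAt (v : List Bool) (y : Bool) :
    shiftA ⁻¹' {x : ℤ → Bool | occursAt x 0 (v ++ [y])}
      = {x : ℤ → Bool | x 1 = y} ∩ {x | occursAt x 0 v} := by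
  ext x
  simp only [Set.mem_preimage, Set.mem_inter_iff, Set.mem_setOf_eq, occursAt,
    Finset.mem_range, List.length_append, List.length_cons, List.length_nil,
    List.reverse_append, List.reverse_cons, List.reverse_nil, List.nil_append,
    List.cons_append]
  constructor
  · intro hx
    constructor
    · have h0 := hx 0 (by omega)
      simpa [shiftA] using h0
    · intro i hi
      have h1 := hx (i+1) (by omega)
      have harg : (0 - ((i+1:ℕ):ℤ)) + 1 = 0 - (i:ℤ) := by push_cast; ring
      have h2 : shiftA x (0 - ((i+1:ℕ):ℤ)) = x (0 - (i:ℤ)) := by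
        show x ((0 - ((i+1:ℕ):ℤ)) + 1) = x (0 - (i:ℤ))
        rw [harg]
      rw [h2] at h1
      rw [h1]
      simp
  · rintro ⟨h1, h2⟩ i hi
    rcases i with _ | i
    · have : shiftA x (0 - ((0:ℕ):ℤ)) = x 1 := by
        show x (0 - ((0:ℕ):ℤ) + 1) = x 1
        norm_num
      rw [this, h1]
      simp
    · have h3 := h2 i (by omega)
      have h2' : shiftA x (0 - ((i+1:ℕ):ℤ)) = x (0 - (i:ℤ)) := by
        show x ((0 - ((i+1:ℕ):ℤ)) + 1) = x (0 - (i:ℤ))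
        congr 1; push_cast; ring
      rw [h2', h3]
      simp

lemma preimage_phi_occursAt (s₀ : S) (v : List Bool) :
    (fun (ω : ℤ → S) (n : ℤ) => decide (ω n = s₀)) ⁻¹' {x | occursAt x 0 v}
      = {ω : ℤ → S | ∀ i, i < v.length →
          decide (ω (-(i:ℤ)) = s₀) = v.reverse.getD i default} := by
  ext ω
  simp [occursAt]


lemma core_bool0_prod (hstat : MeasurePreserving (shiftA (A := S)) μ μ)
    (hMarkov : ∀ s : S,
      μ[(fun ω => if ω 1 = s then (1 : ℝ) else 0) |
          MeasurableSpace.comap (fun ω : ℤ → S => fun i : ℕ => ω (-(i : ℤ))) inferInstance]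
        =ᵐ[μ]
      μ[(fun ω => if ω 1 = s then (1 : ℝ) else 0) |
          MeasurableSpace.comap (fun ω : ℤ → S => ω 0) inferInstance])
    (s₀ : S) (y : Bool) (u : S) {B : Set (ℤ → S)}
    (hB : MeasurableSet[Fpast (0:ℤ)] B) (hBu : B ⊆ {ω | ω 0 = u}) :
    μ ({ω | decide (ω 1 = s₀) = y} ∩ B) * μ {ω : ℤ → S | ω 0 = u}
      = μ ({ω | decide (ω 1 = s₀) = y} ∩ {ω : ℤ → S | ω 0 = u}) * μ B := by
  have hTt : {ω : ℤ → S | decide (ω 1 = s₀) = true} = {ω : ℤ → S | ω 1 = s₀} := by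
    ext ω; simp
  have hcoreT := core0 μ hMarkov s₀ u hB hBu
  cases y
  · -- false case
    have hTtm : MeasurableSet {ω : ℤ → S | ω 1 = s₀} := measurableSet_atom 1 s₀
    have hBm : MeasurableSet B := Fpast_le 0 _ hB
    have hdiffB : B \ {ω : ℤ → S | ω 1 = s₀} = {ω | decide (ω 1 = s₀) = false} ∩ B := by
      ext ω; simp [Set.mem_diff, And.comm]
    have hinterB : B ∩ {ω : ℤ → S | ω 1 = s₀} = {ω : ℤ → S | ω 1 = s₀} ∩ B :=
      Set.inter_comm _ _
    have hSB : μ ({ω : ℤ → S | ω 1 = s₀} ∩ B) + μ ({ω | decide (ω 1 = s₀) = false} ∩ B)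
        = μ B := by
      rw [← hinterB, ← hdiffB]; exact measure_inter_add_diff B hTtm
    have hSA : μ ({ω : ℤ → S | ω 1 = s₀} ∩ {ω : ℤ → S | ω 0 = u})
        + μ ({ω | decide (ω 1 = s₀) = false} ∩ {ω : ℤ → S | ω 0 = u})
        = μ {ω : ℤ → S | ω 0 = u} := by
      have hd : {ω : ℤ → S | ω 0 = u} \ {ω : ℤ → S | ω 1 = s₀}
          = {ω | decide (ω 1 = s₀) = false} ∩ {ω : ℤ → S | ω 0 = u} := by
        ext ω; simp [Set.mem_diff, And.comm]
      have hi : {ω : ℤ → S | ω 0 = u} ∩ {ω : ℤ → S | ω 1 = s₀}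
          = {ω : ℤ → S | ω 1 = s₀} ∩ {ω : ℤ → S | ω 0 = u} := Set.inter_comm _ _
      rw [← hi, ← hd]; exact measure_inter_add_diff _ hTtm
    have hfin : μ ({ω : ℤ → S | ω 1 = s₀} ∩ B) * μ {ω : ℤ → S | ω 0 = u} ≠ ⊤ :=
      ENNReal.mul_ne_top (measure_ne_top μ _) (measure_ne_top μ _)
    apply WithTop.add_right_cancel hfin
    calc μ ({ω | decide (ω 1 = s₀) = false} ∩ B) * μ {ω : ℤ → S | ω 0 = u}
          + μ ({ω : ℤ → S | ω 1 = s₀} ∩ B) * μ {ω : ℤ → S | ω 0 = u}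
        = (μ ({ω : ℤ → S | ω 1 = s₀} ∩ B) + μ ({ω | decide (ω 1 = s₀) = false} ∩ B))
            * μ {ω : ℤ → S | ω 0 = u} := by ring
      _ = μ B * μ {ω : ℤ → S | ω 0 = u} := by rw [hSB]
      _ = μ B * (μ ({ω : ℤ → S | ω 1 = s₀} ∩ {ω : ℤ → S | ω 0 = u})
            + μ ({ω | decide (ω 1 = s₀) = false} ∩ {ω : ℤ → S | ω 0 = u})) := by rw [hSA]
      _ = μ ({ω | decide (ω 1 = s₀) = false} ∩ {ω : ℤ → S | ω 0 = u}) * μ B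
            + μ ({ω : ℤ → S | ω 1 = s₀} ∩ {ω : ℤ → S | ω 0 = u}) * μ B := by ring
      _ = μ ({ω | decide (ω 1 = s₀) = false} ∩ {ω : ℤ → S | ω 0 = u}) * μ B
            + μ ({ω : ℤ → S | ω 1 = s₀} ∩ B) * μ {ω : ℤ → S | ω 0 = u} := by rw [hcoreT]
  · -- true case
    rw [hTt]
    exact hcoreT

lemma core_div_bool0 (hstat : MeasurePreserving (shiftA (A := S)) μ μ)
    (hMarkov : ∀ s : S,
      μ[(fun ω => if ω 1 = s then (1 : ℝ) else 0) |
          MeasurableSpace.comap (fun ω : ℤ → S => fun i : ℕ => ω (-(i : ℤ))) inferInstance]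
        =ᵐ[μ]
      μ[(fun ω => if ω 1 = s then (1 : ℝ) else 0) |
          MeasurableSpace.comap (fun ω : ℤ → S => ω 0) inferInstance])
    (s₀ : S) (y : Bool) (u : S) {B : Set (ℤ → S)}
    (hB : MeasurableSet[Fpast (0:ℤ)] B) (hBu : B ⊆ {ω | ω 0 = u}) :
    μ ({ω | decide (ω 1 = s₀) = y} ∩ B)
      = μ ({ω | decide (ω 1 = s₀) = y} ∩ {ω : ℤ → S | ω 0 = u})
        / μ {ω : ℤ → S | ω 0 = u} * μ B := by
  by_cases h0 : μ {ω : ℤ → S | ω 0 = u} = 0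
  · have hB0 : μ B = 0 := le_antisymm (le_trans (measure_mono hBu) h0.le) (zero_le)
    have hL : μ ({ω | decide (ω 1 = s₀) = y} ∩ B) = 0 :=
      le_antisymm (le_trans (measure_mono Set.inter_subset_right) hB0.le) (zero_le)
    rw [hL, hB0, mul_zero]
  · have hcore := core_bool0_prod μ hstat hMarkov s₀ y u hB hBu
    have ha : μ {ω : ℤ → S | ω 0 = u} ≠ ⊤ := measure_ne_top μ _
    have hb : μ ({ω | decide (ω 1 = s₀) = y} ∩ B)
        = μ ({ω | decide (ω 1 = s₀) = y} ∩ {ω : ℤ → S | ω 0 = u}) * μ B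
          / μ {ω : ℤ → S | ω 0 = u} := by
      rw [ENNReal.eq_div_iff h0 ha, mul_comm]
      exact hcore
    rw [hb, div_eq_mul_inv, div_eq_mul_inv, mul_right_comm]


lemma memory_word (hstat : MeasurePreserving (shiftA (A := S)) μ μ)
    (hMarkov : ∀ s : S,
      μ[(fun ω => if ω 1 = s then (1 : ℝ) else 0) |
          MeasurableSpace.comap (fun ω : ℤ → S => fun i : ℕ => ω (-(i : ℤ))) inferInstance]
        =ᵐ[μ]
      μ[(fun ω => if ω 1 = s then (1 : ℝ) else 0) |
          MeasurableSpace.comap (fun ω : ℤ → S => ω 0) inferInstance])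
    (s₀ : S)
    (hνshift : MeasurePreserving (shiftA (A := Bool))
      (μ.map (fun (ω : ℤ → S) (n : ℤ) => decide (ω n = s₀)))
      (μ.map (fun (ω : ℤ → S) (n : ℤ) => decide (ω n = s₀))))
    (w : List Bool) (j : ℕ) (hj : j < w.length)
    (htrue : w.reverse.getD j default = true) :
    IsMemoryWord (μ.map (fun (ω : ℤ → S) (n : ℤ) => decide (ω n = s₀))) w := by
  intro z y hz hposzw
  classical
  set φ : (ℤ → S) → (ℤ → Bool) := fun ω n => decide (ω n = s₀) with hφdef
  have hφ : Measurable φ := measurable_phi s₀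
  set ν := μ.map φ with hνdef
  have hνE : ∀ v : List Bool, ν {x | occursAt x 0 v} = μ (φ ⁻¹' {x | occursAt x 0 v}) :=
    fun v => Measure.map_apply hφ (measurableSet_occursAt v 0)
  have hword : ∀ (v : List Bool) (y' : Bool),
      ν {x | occursAt x 0 (v ++ [y'])}
        = μ ({ω | decide (ω 1 = s₀) = y'} ∩ φ ⁻¹' {x | occursAt x 0 v}) := by
    intro v y'
    have h1 : ν (shiftA ⁻¹' {x | occursAt x 0 (v ++ [y'])})
        = ν {x | occursAt x 0 (v ++ [y'])} :=
      hνshift.measure_preimage (measurableSet_occursAt _ 0).nullMeasurableSet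
    rw [← h1, shift_preimage_occursAt]
    rw [Measure.map_apply hφ ((measurableSet_coord 1 y').inter (measurableSet_occursAt v 0))]
    rw [Set.preimage_inter]
    congr 1
  have hpre : ∀ v : List Bool, φ ⁻¹' {x | occursAt x 0 v}
      = {ω : ℤ → S | ∀ i, i < v.length →
          decide (ω (-(i:ℤ)) = s₀) = v.reverse.getD i default} :=
    preimage_phi_occursAt s₀
  set b : ℕ → Bool := fun i => w.reverse.getD i default with hb
  have hlenz : w.length ≤ (z ++ w).length := by
    rw [List.length_append]; omega
  have hgetD : ∀ i, i < w.length →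
      (z ++ w).reverse.getD i default = w.reverse.getD i default := by
    intro i hi
    rw [List.reverse_append]
    exact List.getD_append _ _ _ _ (by rw [List.length_reverse]; exact hi)
  -- tail sets
  set Aw : Set (ℤ → S) := {ω | ∀ i, j ≤ i → i < w.length →
      decide (ω (-(i:ℤ)) = s₀) = w.reverse.getD i default} with hAwdef
  set Azw : Set (ℤ → S) := {ω | ∀ i, j ≤ i → i < (z ++ w).length →
      decide (ω (-(i:ℤ)) = s₀) = (z ++ w).reverse.getD i default} with hAzwdef
  have hsplitw : φ ⁻¹' {x | occursAt x 0 w}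
      = {ω | ∀ i < j, decide (ω (-(i:ℤ)) = s₀) = b i} ∩ Aw := by
    rw [hpre]
    ext ω
    simp only [Set.mem_setOf_eq, Set.mem_inter_iff, hAwdef, hb]
    constructor
    · intro h
      exact ⟨fun i hi => h i (lt_of_lt_of_le hi hj.le), fun i h1 h2 => h i h2⟩
    · rintro ⟨h1, h2⟩ i hi
      by_cases hij : i < j
      · exact h1 i hij
      · exact h2 i (le_of_not_gt hij) hi
  have hsplitzw : φ ⁻¹' {x | occursAt x 0 (z ++ w)}
      = {ω | ∀ i < j, decide (ω (-(i:ℤ)) = s₀) = b i} ∩ Azw := by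
    rw [hpre]
    ext ω
    simp only [Set.mem_setOf_eq, Set.mem_inter_iff, hAzwdef, hb]
    constructor
    · intro h
      refine ⟨fun i hi => ?_, fun i h1 h2 => h i h2⟩
      rw [← hgetD i (lt_of_lt_of_le hi hj.le)]
      exact h i (lt_of_lt_of_le (lt_of_lt_of_le hi hj.le) hlenz)
    · rintro ⟨h1, h2⟩ i hi
      by_cases hij : i < j
      · rw [hgetD i (lt_of_lt_of_le hij hj.le)]
        exact h1 i hij
      · exact h2 i (le_of_not_gt hij) hi
  -- tail sets are Fpast (-j) measurable
  have htailmeas : ∀ v : List Bool, MeasurableSet[Fpast (-(j:ℤ))]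
      {ω : ℤ → S | ∀ i, j ≤ i → i < v.length →
        decide (ω (-(i:ℤ)) = s₀) = v.reverse.getD i default} := by
    intro v
    rw [measurableSet_Fpast_iff]
    refine ⟨⋂ i' ∈ Finset.range (v.length - j),
      {f : ℕ → S | decide (f i' = s₀) = v.reverse.getD (j + i') default}, ?_, ?_⟩
    · exact MeasurableSet.biInter (Finset.range (v.length - j)).countable_toSet
        (fun i' _ => measurableSet_decide (fun f : ℕ → S => f i')
          (measurable_pi_apply i') s₀ _)
    · ext ω
      simp only [Set.mem_preimage, Set.mem_iInter, Finset.mem_range, Set.mem_setOf_eq, piT]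
      constructor
      · intro h i hji hiv
        have h2 := h (i - j) (by omega)
        rw [show j + (i - j) = i by omega] at h2
        have h3 : (-(j:ℤ)) - ((i - j : ℕ):ℤ) = -(i:ℤ) := by
          rw [Nat.cast_sub hji]; ring
        simp only [h3] at h2
        exact h2
      · intro h i' hi'
        have h2 := h (j + i') (by omega) (by omega)
        have h3 : -((j + i' : ℕ):ℤ) = -(j:ℤ) - (i':ℤ) := by push_cast; ring
        simp only [h3] at h2
        exact h2
  have hAwmeas : MeasurableSet[Fpast (-(j:ℤ))] Aw := htailmeas w
  have hAzwmeas : MeasurableSet[Fpast (-(j:ℤ))] Azw := htailmeas (z ++ w)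
  have hAwsub : Aw ⊆ {ω : ℤ → S | ω (-(j:ℤ)) = s₀} := by
    intro ω hω
    have h2 := hω j le_rfl hj
    rw [htrue] at h2
    exact of_decide_eq_true h2
  have hAzwsub : Azw ⊆ {ω : ℤ → S | ω (-(j:ℤ)) = s₀} := by
    intro ω hω
    have h2 := hω j le_rfl (lt_of_lt_of_le hj hlenz)
    rw [hgetD j hj, htrue] at h2
    exact of_decide_eq_true h2
  -- base hypotheses for ind
  have hTymeas : MeasurableSet {ω : ℤ → S | decide (ω 1 = s₀) = y} :=
    measurableSet_decide (fun ω : ℤ → S => ω 1) (measurable_pi_apply 1) s₀ y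
  have H0y : ∃ h₀ : S → ℝ≥0∞, ∀ A : Set (ℤ → S), MeasurableSet[Fpast (0:ℤ)] A →
      μ ({ω | decide (ω 1 = s₀) = y} ∩ A) = ∑' u : S, h₀ u * μ (A ∩ {ω | ω 0 = u}) := by
    refine ⟨fun u => μ ({ω | decide (ω 1 = s₀) = y} ∩ {ω : ℤ → S | ω 0 = u})
      / μ {ω : ℤ → S | ω 0 = u}, fun A hA => ?_⟩
    have hAmeas : MeasurableSet A := Fpast_le 0 _ hA
    rw [measure_partition μ 0 (hTymeas.inter hAmeas)]
    refine tsum_congr fun u => ?_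
    have h1 : ({ω : ℤ → S | decide (ω 1 = s₀) = y} ∩ A) ∩ {ω : ℤ → S | ω 0 = u}
        = {ω : ℤ → S | decide (ω 1 = s₀) = y} ∩ (A ∩ {ω : ℤ → S | ω 0 = u}) :=
      Set.inter_assoc _ _ _
    rw [h1]
    exact core_div_bool0 μ hstat hMarkov s₀ y u (hA.inter (atom_mem_Fpast 0 u))
      Set.inter_subset_right
  have H0univ : ∃ h₀ : S → ℝ≥0∞, ∀ A : Set (ℤ → S), MeasurableSet[Fpast (0:ℤ)] A →
      μ (Set.univ ∩ A) = ∑' u : S, h₀ u * μ (A ∩ {ω | ω 0 = u}) := by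
    refine ⟨fun _ => 1, fun A hA => ?_⟩
    rw [Set.univ_inter, measure_partition μ 0 (Fpast_le 0 _ hA)]
    exact tsum_congr fun u => (one_mul _).symm
  obtain ⟨hT, HT⟩ := ind μ hstat hMarkov s₀ b {ω | decide (ω 1 = s₀) = y} H0y j
  obtain ⟨hU, HU⟩ := ind μ hstat hMarkov s₀ b Set.univ H0univ j
  -- collapsing the tsum
  have hcollapse : ∀ (h : S → ℝ≥0∞) (V : Set (ℤ → S)),
      V ⊆ {ω : ℤ → S | ω (-(j:ℤ)) = s₀} →
      (∑' u : S, h u * μ (V ∩ {ω | ω (-(j:ℤ)) = u})) = h s₀ * μ V := by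
    intro h V hV
    rw [tsum_eq_single s₀ ?side]
    · rw [Set.inter_eq_self_of_subset_left hV]
    case side =>
      intro u hu
      have hemp : V ∩ {ω : ℤ → S | ω (-(j:ℤ)) = u} = ∅ := by
        ext ω
        simp only [Set.mem_inter_iff, Set.mem_setOf_eq, Set.mem_empty_iff_false, iff_false,
          not_and]
        intro hωV hωu
        exact hu ((hωu.symm).trans (hV hωV))
      rw [hemp, measure_empty, mul_zero]
  have hwT : μ ({ω | decide (ω 1 = s₀) = y} ∩ φ ⁻¹' {x | occursAt x 0 w})
      = hT s₀ * μ Aw := by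
    rw [hsplitw, ← Set.inter_assoc, HT Aw hAwmeas, hcollapse hT Aw hAwsub]
  have hwU : μ (φ ⁻¹' {x | occursAt x 0 w}) = hU s₀ * μ Aw := by
    have h2 := HU Aw hAwmeas
    rw [Set.univ_inter] at h2
    rw [hsplitw, h2, hcollapse hU Aw hAwsub]
  have hzwT : μ ({ω | decide (ω 1 = s₀) = y} ∩ φ ⁻¹' {x | occursAt x 0 (z ++ w)})
      = hT s₀ * μ Azw := by
    rw [hsplitzw, ← Set.inter_assoc, HT Azw hAzwmeas, hcollapse hT Azw hAzwsub]
  have hzwU : μ (φ ⁻¹' {x | occursAt x 0 (z ++ w)}) = hU s₀ * μ Azw := by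
    have h2 := HU Azw hAzwmeas
    rw [Set.univ_inter] at h2
    rw [hsplitzw, h2, hcollapse hU Azw hAzwsub]
  -- positivity
  have hposzw' : μ ({ω | decide (ω 1 = s₀) = y} ∩ φ ⁻¹' {x | occursAt x 0 (z ++ w)}) ≠ 0 := by
    intro hcontra
    unfold wordProb at hposzw
    rw [hword (z ++ w) y, hcontra] at hposzw
    simp at hposzw
  have hTne0 : hT s₀ ≠ 0 := by
    intro hcontra
    rw [hzwT, hcontra, zero_mul] at hposzw'
    exact hposzw' rfl
  have hAzwne0 : μ Azw ≠ 0 := by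
    intro hcontra
    rw [hzwT, hcontra, mul_zero] at hposzw'
    exact hposzw' rfl
  have hEzwne0 : μ (φ ⁻¹' {x | occursAt x 0 (z ++ w)}) ≠ 0 := by
    intro hcontra
    exact hposzw' (le_antisymm
      (le_trans (measure_mono Set.inter_subset_right) hcontra.le) (zero_le))
  have hUne0 : hU s₀ ≠ 0 := by
    intro hcontra
    rw [hzwU, hcontra, zero_mul] at hEzwne0
    exact hEzwne0 rfl
  have hEsub : φ ⁻¹' {x | occursAt x 0 (z ++ w)} ⊆ φ ⁻¹' {x | occursAt x 0 w} := by
    rw [hpre, hpre]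
    intro ω hω i hi
    rw [← hgetD i hi]
    exact hω i (lt_of_lt_of_le hi hlenz)
  have hAwne0 : μ Aw ≠ 0 := by
    intro hcontra
    apply hEzwne0
    have hsub2 : φ ⁻¹' {x | occursAt x 0 (z ++ w)} ⊆ Aw := by
      intro ω hω
      have := hEsub hω
      rw [hsplitw] at this
      exact this.2
    exact le_antisymm (le_trans (measure_mono hsub2) hcontra.le) (zero_le)
  have hTnetop : hT s₀ ≠ ⊤ := by
    intro hcontra
    have : μ ({ω | decide (ω 1 = s₀) = y} ∩ φ ⁻¹' {x | occursAt x 0 (z ++ w)}) = ⊤ := by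
      rw [hzwT, hcontra, ENNReal.top_mul hAzwne0]
    exact (measure_ne_top μ _) this
  have hUnetop : hU s₀ ≠ ⊤ := by
    intro hcontra
    have : μ (φ ⁻¹' {x | occursAt x 0 (z ++ w)}) = ⊤ := by
      rw [hzwU, hcontra, ENNReal.top_mul hAzwne0]
    exact (measure_ne_top μ _) this
  -- final computation
  have hAwtoReal : (μ Aw).toReal ≠ 0 :=
    ENNReal.toReal_ne_zero.mpr ⟨hAwne0, measure_ne_top μ _⟩
  have hAzwtoReal : (μ Azw).toReal ≠ 0 :=
    ENNReal.toReal_ne_zero.mpr ⟨hAzwne0, measure_ne_top μ _⟩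
  show condProb ν y w = condProb ν y (z ++ w)
  unfold condProb wordProb
  rw [hword w y, hword (z ++ w) y, hνE w, hνE (z ++ w), hwT, hwU, hzwT, hzwU,
    ENNReal.toReal_mul, ENNReal.toReal_mul, ENNReal.toReal_mul, ENNReal.toReal_mul,
    mul_div_mul_right _ _ hAwtoReal, mul_div_mul_right _ _ hAzwtoReal]


lemma pastWord_eq {A : Type} [Inhabited A] (x : ℤ → A) (t : ℤ) (k : ℕ) :
    pastWord x t k = ((List.range k).map (fun i : ℕ => x (t - (i : ℤ)))).reverse := by
  unfold pastWord
  congr 1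
  show ((List.range k).flatMap fun a => [((a:ℕ):ℤ)]).map (fun i : ℤ => x (t - i))
      = List.map (fun i : ℕ => x (t - (i:ℤ))) (List.range k)
  rw [List.map_flatMap]
  induction (List.range k) with
  | nil => rfl
  | cons a l ih => simp_all

lemma part1 (hstat : MeasurePreserving (shiftA (A := S)) μ μ) (s₀ : S) :
    MeasurePreserving (shiftA (A := Bool)) (μ.map (fun ω n => decide (ω n = s₀)))
      (μ.map (fun ω n => decide (ω n = s₀))) := by
  have hφ := measurable_phi (S := S) s₀
  have hσB : Measurable (shiftA (A := Bool)) :=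
    measurable_pi_lambda _ fun n => measurable_pi_apply _
  refine ⟨hσB, ?_⟩
  rw [Measure.map_map hσB hφ]
  have hcomm : (shiftA (A := Bool)) ∘ (fun (ω : ℤ → S) (n : ℤ) => decide (ω n = s₀))
      = (fun (ω : ℤ → S) (n : ℤ) => decide (ω n = s₀)) ∘ (shiftA (A := S)) := rfl
  rw [hcomm, ← Measure.map_map hφ hstat.measurable, hstat.map_eq]

lemma part2 (hstat : MeasurePreserving (shiftA (A := S)) μ μ)
    (herg : Ergodic (shiftA (A := S)) μ) (s₀ : S) :
    Ergodic (shiftA (A := Bool)) (μ.map (fun ω n => decide (ω n = s₀))) := by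
  have hφ := measurable_phi (S := S) s₀
  refine ⟨part1 μ hstat s₀, ⟨?_⟩⟩
  intro A hA hinv
  have hA' : MeasurableSet ((fun (ω : ℤ → S) (n : ℤ) => decide (ω n = s₀)) ⁻¹' A) := hφ hA
  have hinv' : shiftA ⁻¹' ((fun (ω : ℤ → S) (n : ℤ) => decide (ω n = s₀)) ⁻¹' A)
      = (fun (ω : ℤ → S) (n : ℤ) => decide (ω n = s₀)) ⁻¹' A := by
    have h1 : shiftA ⁻¹' ((fun (ω : ℤ → S) (n : ℤ) => decide (ω n = s₀)) ⁻¹' A)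
        = (fun (ω : ℤ → S) (n : ℤ) => decide (ω n = s₀)) ⁻¹' (shiftA ⁻¹' A) := rfl
    rw [h1, hinv]
  rw [Filter.eventuallyConst_set']
  rcases herg.ae_empty_or_univ hA' hinv' with h | h
  · left
    rw [ae_eq_empty] at h ⊢
    rw [Measure.map_apply hφ hA]
    exact h
  · right
    rw [ae_eq_univ] at h ⊢
    rw [Measure.map_apply hφ hA.compl, Set.preimage_compl]
    exact h

end Stmt5Aux

open Stmt5Aux

/-- an instantaneous indicator function `X_n = 1_{{M_n = s}}` of a stationary
ergodic countable-state first-order Markov chain is a stationary, ergodic, finitarily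
Markovian binary process. -/
theorem stmt5 {S : Type} [Countable S] [DecidableEq S] [Inhabited S]
    [MeasurableSpace S] [MeasurableSingletonClass S]
    (μ : Measure (ℤ → S)) [IsProbabilityMeasure μ]
    (hstat : MeasurePreserving (shiftA (A := S)) μ μ) (herg : Ergodic (shiftA (A := S)) μ)
    (hMarkov : ∀ s : S,
      μ[(fun ω => if ω 1 = s then (1 : ℝ) else 0) |
          MeasurableSpace.comap (fun ω : ℤ → S => fun i : ℕ => ω (-(i : ℤ))) inferInstance]
        =ᵐ[μ]
      μ[(fun ω => if ω 1 = s then (1 : ℝ) else 0) |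
          MeasurableSpace.comap (fun ω : ℤ → S => ω 0) inferInstance])
    (s₀ : S) (hpos : 0 < μ {ω | ω 1 = s₀}) :
    MeasurePreserving (shiftA (A := Bool)) (μ.map (fun ω n => decide (ω n = s₀)))
        (μ.map (fun ω n => decide (ω n = s₀))) ∧
    Ergodic (shiftA (A := Bool)) (μ.map (fun ω n => decide (ω n = s₀))) ∧
    (∀ᵐ x ∂(μ.map (fun ω n => decide (ω n = s₀))),
      ∃ k : ℕ, IsMemoryWord (μ.map (fun ω n => decide (ω n = s₀))) (pastWord x 0 k)) := by
  have hφ := measurable_phi (S := S) s₀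
  refine ⟨part1 μ hstat s₀, part2 μ hstat herg s₀, ?_⟩
  -- part 3
  have hνshift := part1 μ hstat s₀
  have hrec := recurrence μ hstat herg s₀ hpos
  rw [ae_iff]
  have hGoodc : MeasurableSet {x : ℤ → Bool | ∀ j : ℕ, ¬ x (-(j:ℤ)) = true} := by
    have he : {x : ℤ → Bool | ∀ j : ℕ, ¬ x (-(j:ℤ)) = true}
        = ⋂ j : ℕ, ({x : ℤ → Bool | x (-(j:ℤ)) = true})ᶜ := by
      ext x; simp
    rw [he]
    exact MeasurableSet.iInter fun j => (measurableSet_coord _ _).compl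
  have hν0 : (μ.map (fun ω n => decide (ω n = s₀)))
      {x : ℤ → Bool | ∀ j : ℕ, ¬ x (-(j:ℤ)) = true} = 0 := by
    rw [Measure.map_apply hφ hGoodc]
    have he : (fun (ω : ℤ → S) (n : ℤ) => decide (ω n = s₀)) ⁻¹'
        {x : ℤ → Bool | ∀ j : ℕ, ¬ x (-(j:ℤ)) = true}
        = {ω : ℤ → S | ∀ j : ℕ, ω (-(j:ℤ)) ≠ s₀} := by
      ext ω; simp
    rw [he]
    exact hrec
  refine measure_mono_null ?_ hν0
  intro x hx
  simp only [Set.mem_setOf_eq, not_exists] at hx ⊢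
  intro j hxj
  apply hx (j + 1)
  -- build the memory word
  have hlen : (pastWord x 0 (j+1)).length = j + 1 := by
    rw [pastWord_eq, List.length_reverse, List.length_map, List.length_range]
  have hgd : (pastWord x 0 (j+1)).reverse.getD j default = true := by
    rw [pastWord_eq, List.reverse_reverse]
    rw [List.getD_eq_getElem _ _
      (by rw [List.length_map, List.length_range]; omega)]
    rw [List.getElem_map, List.getElem_range]
    simpa using hxj
  exact memory_word μ hstat hMarkov s₀ hνshift (pastWord x 0 (j+1)) j
    (by rw [hlen]; omega) hgd

end
end
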